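/- arXiv:1609.05820 — 8 statements merged into one kernel-verified Lean document; each statement's English description precedes it below -/
import Mathlib

section
/- Let v ∈ R^m be a nonzero vector with largest entry v_(1) attained at coordinate j and second largest entry v_(2), with v_(1) > v_(2). If μ > 1/(v_(1) − v_(2)), then the Euclidean projection of μv onto the standard simplex Δ equals the basis vector e_j. -/
/-- The standard simplex in `ℝ^m` (with the Euclidean norm). -/
def stdSimplexE (m : ℕ) : Set (EuclideanSpace ℝ (Fin m)) :=
  {s | (∀ i, 0 ≤ s i) ∧ ∑ i, s i = 1}

/-- `p` is the Euclidean projection of `v` onto the standard simplex. -/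
def IsSimplexProj (m : ℕ) (v p : EuclideanSpace ℝ (Fin m)) : Prop :=
  p ∈ stdSimplexE m ∧ ∀ q ∈ stdSimplexE m, ‖v - p‖ ≤ ‖v - q‖

/-- Fact 3: if `v` is nonzero with strictly largest entry at coordinate `j`
and `μ > 1/(v_(1) − v_(2))`, then the projection of `μ v` onto the
standard simplex is the basis vector `e_j`. -/
theorem simplexProj_smul_eq_single
    (m : ℕ) (v : EuclideanSpace ℝ (Fin m)) (j : Fin m) (μ : ℝ)
    (hv : v ≠ 0)
    (hne : (Finset.univ.erase j).Nonempty)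
    (hmax : ∀ i, v i ≤ v j)
    (hgap : (Finset.univ.erase j).sup' hne (fun i => v i) < v j)
    (hμ : 1 / (v j - (Finset.univ.erase j).sup' hne (fun i => v i)) < μ) :
    IsSimplexProj m (μ • v) (EuclideanSpace.single j (1 : ℝ)) := by
  classical
  set M := (Finset.univ.erase j).sup' hne (fun i => v i) with hMdef
  have hMlt : M < v j := hgap
  have hμ' : 1 < μ * (v j - M) := (div_lt_iff₀ (by linarith)).mp hμ
  have hμpos : 0 < μ := by nlinarith
  set e : EuclideanSpace ℝ (Fin m) := EuclideanSpace.single j (1 : ℝ) with he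
  have hemem : e ∈ stdSimplexE m := by
    constructor
    · intro i
      rw [he, EuclideanSpace.single_apply]
      split <;> norm_num
    · simp [he, EuclideanSpace.single_apply]
  refine ⟨hemem, ?_⟩
  intro q hq
  obtain ⟨hq0, hq1⟩ := hq
  have hqj1 : q j ≤ 1 := hq1 ▸ Finset.single_le_sum (fun i _ => hq0 i) (Finset.mem_univ j)
  have hinner : (inner ℝ ((μ • v) - e) (q - e) : ℝ) ≤ 0 := by
    have hsum : ∑ i ∈ Finset.univ.erase j, q i = 1 - q j := by
      have h := Finset.add_sum_erase Finset.univ q (Finset.mem_univ j)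
      rw [hq1] at h
      linarith
    have hbound : ∑ i ∈ Finset.univ.erase j, v i * q i ≤ M * (1 - q j) := by
      rw [← hsum, Finset.mul_sum]
      refine Finset.sum_le_sum fun i hi => ?_
      exact mul_le_mul_of_nonneg_right (Finset.le_sup' _ hi) (hq0 i)
    have hexp : (inner ℝ ((μ • v) - e) (q - e) : ℝ) =
        (μ * v j - 1) * (q j - 1) + ∑ i ∈ Finset.univ.erase j, μ * (v i * q i) := by
      rw [PiLp.inner_apply]
      rw [← Finset.add_sum_erase _ _ (Finset.mem_univ j)]
      congr 1
      · simp [he, EuclideanSpace.single_apply, PiLp.sub_apply, PiLp.smul_apply,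
          smul_eq_mul, RCLike.inner_apply, starRingEnd_apply]
        ring
      · refine Finset.sum_congr rfl fun i hi => ?_
        have hij : i ≠ j := Finset.ne_of_mem_erase hi
        simp [he, EuclideanSpace.single_apply, hij, PiLp.sub_apply, PiLp.smul_apply,
          smul_eq_mul, RCLike.inner_apply, starRingEnd_apply]
        ring
    rw [hexp]
    have hS : μ * ∑ i ∈ Finset.univ.erase j, v i * q i ≤ μ * (M * (1 - q j)) :=
      mul_le_mul_of_nonneg_left hbound hμpos.le
    rw [← Finset.mul_sum]
    nlinarith [mul_nonneg (sub_nonneg.mpr hqj1) (sub_nonneg.mpr hμ'.le)]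
  have hnorm : ‖μ • v - e‖ ^ 2 ≤ ‖μ • v - q‖ ^ 2 := by
    have h1 : μ • v - q = (μ • v - e) - (q - e) := by abel
    have h2 := norm_sub_sq_real (μ • v - e) (q - e)
    rw [← h1] at h2
    rw [h2]
    nlinarith [sq_nonneg ‖q - e‖]
  nlinarith [norm_nonneg (μ • v - e), norm_nonneg (μ • v - q)]
end

section
/- Let P and Q be probability distributions on a finite set Y with P(y), Q(y) > 0 for all y. If max_y P(y)/Q(y) ≤ κ₀ and max_y Q(y)/P(y) ≤ κ₀, then E_{y∼P}[(log(P(y)/Q(y)))²] ≤ 2 κ₀² KL(Q‖P). -/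
lemma exp_lb (u : ℝ) (hu : 0 ≤ u) :
    1 + u + u ^ 2 / 2 + u ^ 3 / 6 ≤ Real.exp u := by
  have h := Real.sum_le_exp_of_nonneg hu 4
  simp [Finset.sum_range_succ, Nat.factorial] at h
  nlinarith [h]

lemma exp_ub (u : ℝ) (h0 : 0 ≤ u) (h1 : u ≤ 1) :
    Real.exp u ≤ 1 + u + u ^ 2 / 2 + u ^ 3 / 2 := by
  have h := Real.exp_bound' h0 h1 (n := 3) (by norm_num)
  simp [Finset.sum_range_succ, Nat.factorial] at h
  nlinarith [pow_nonneg h0 3]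

lemma key1 (u : ℝ) (hu : 0 ≤ u) : u ^ 2 ≤ 2 * (Real.exp u - 1 - u) := by
  nlinarith [exp_lb u hu, pow_nonneg hu 3]

lemma key2 (u : ℝ) (hu : 0 ≤ u) :
    u ^ 2 ≤ 2 * (1 - Real.exp u + u * Real.exp u) := by
  rcases le_or_gt u 1 with h | h
  · have hb := exp_ub u hu h
    have h1u : 0 ≤ 1 - u := by linarith
    have hE : Real.exp u ≤ 1 + u + u ^ 2 / 2 + u ^ 3 / 2 := hb
    nlinarith [pow_nonneg hu 4, mul_nonneg h1u (sub_nonneg.2 hE)]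
  · have hb := exp_lb u hu
    have h1u : 0 ≤ u - 1 := by linarith
    nlinarith [pow_nonneg hu 4, pow_nonneg hu 3,
      mul_nonneg h1u (sub_nonneg.2 hb)]

/-- pointwise inequality: for `0 < r ≤ κ₀`, `κ₀ ≥ 1`,
`r (log r)^2 ≤ 2 κ₀^2 (r - 1 - log r)`. -/
lemma pointwise (r κ₀ : ℝ) (hr : 0 < r) (hκ : 1 ≤ κ₀) (hrκ : r ≤ κ₀) :
    r * Real.log r ^ 2 ≤ 2 * κ₀ ^ 2 * (r - 1 - Real.log r) := by
  have hg : 0 ≤ r - 1 - Real.log r := by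
    nlinarith [Real.add_one_le_exp (Real.log r), Real.exp_log hr]
  have hκ2 : 1 ≤ κ₀ ^ 2 := one_le_pow₀ hκ
  rcases le_or_gt 1 r with h1 | h1
  · -- r ≥ 1, u = log r ≥ 0
    set u := Real.log r with hu
    have hu0 : 0 ≤ u := Real.log_nonneg h1
    have hexp : Real.exp u = r := Real.exp_log hr
    have hk := key1 u hu0
    rw [hexp] at hk
    calc r * u ^ 2 ≤ κ₀ * u ^ 2 := by nlinarith [sq_nonneg u]
      _ ≤ κ₀ * (2 * (r - 1 - u)) := by
          have := mul_le_mul_of_nonneg_left hk (le_trans zero_le_one hκ)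
          linarith
      _ ≤ 2 * κ₀ ^ 2 * (r - 1 - u) := by
          have h2 : 0 ≤ (κ₀ ^ 2 - κ₀) * (r - 1 - u) := by
            apply mul_nonneg _ hg
            nlinarith
          nlinarith [h2]
  · -- r < 1, u = -log r > 0
    set u := -Real.log r with hu
    have hu0 : 0 ≤ u := by
      have : Real.log r ≤ 0 := Real.log_nonpos hr.le h1.le
      linarith
    have hexp : Real.exp u = 1 / r := by
      rw [hu, ← Real.log_inv, Real.exp_log (by positivity), one_div]
    have hk := key2 u hu0
    rw [hexp] at hk
    -- hk : u^2 ≤ 2 * (1 - 1/r + u * (1/r))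
    have hr' : r ≠ 0 := hr.ne'
    have hmain : r * u ^ 2 ≤ 2 * (r - 1 + u) := by
      have h2 := mul_le_mul_of_nonneg_left hk hr.le
      have h3 : r * (2 * (1 - 1 / r + u * (1 / r))) = 2 * (r - 1 + u) := by
        field_simp
      linarith [h3 ▸ h2]
    have hlog : Real.log r = -u := by rw [hu]; ring
    calc r * Real.log r ^ 2 = r * u ^ 2 := by rw [hlog]; ring
      _ ≤ 2 * (r - 1 - Real.log r) := by rw [hlog]; linarith
      _ ≤ 2 * κ₀ ^ 2 * (r - 1 - Real.log r) := by nlinarith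

/-- Kullback–Leibler divergence between two pmfs on a finite set. -/
noncomputable def klDiv' {Y : Type*} [Fintype Y] (P Q : Y → ℝ) : ℝ :=
  ∑ y, P y * Real.log (P y / Q y)

/-- If both likelihood ratios are bounded by `κ₀`, then
`E_{y∼P}[(log(P(y)/Q(y)))²] ≤ 2 κ₀² KL(Q‖P)`. -/
theorem second_moment_log_ratio_le {Y : Type*} [Fintype Y] (P Q : Y → ℝ) (κ₀ : ℝ)
    (hP : ∀ y, 0 < P y) (hQ : ∀ y, 0 < Q y)
    (hPs : ∑ y, P y = 1) (hQs : ∑ y, Q y = 1)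
    (hPQ : ∀ y, P y / Q y ≤ κ₀) (hQP : ∀ y, Q y / P y ≤ κ₀) :
    ∑ y, P y * (Real.log (P y / Q y)) ^ 2 ≤ 2 * κ₀ ^ 2 * klDiv' Q P := by
  have hY : Nonempty Y := by
    by_contra h
    rw [not_nonempty_iff] at h
    rw [Finset.univ_eq_empty, Finset.sum_empty] at hPs
    norm_num at hPs
  obtain ⟨y0⟩ := hY
  have hκ : 1 ≤ κ₀ := by
    have h1 := hPQ y0
    have h2 := hQP y0
    have hprod : (P y0 / Q y0) * (Q y0 / P y0) = 1 := by
      rw [div_mul_div_comm, mul_comm (P y0) (Q y0)]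
      exact div_self (mul_pos (hQ y0) (hP y0)).ne'
    nlinarith [div_pos (hP y0) (hQ y0), div_pos (hQ y0) (hP y0)]
  -- pointwise bound
  have hpt : ∀ y, P y * Real.log (P y / Q y) ^ 2 ≤
      2 * κ₀ ^ 2 * (P y - Q y - Q y * Real.log (P y / Q y)) := by
    intro y
    have hr : 0 < P y / Q y := div_pos (hP y) (hQ y)
    have h := pointwise (P y / Q y) κ₀ hr hκ (hPQ y)
    have hQy := hQ y
    have := mul_le_mul_of_nonneg_left h hQy.le
    have hPy : Q y * (P y / Q y) = P y := by field_simp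
    calc P y * Real.log (P y / Q y) ^ 2
        = Q y * (P y / Q y * Real.log (P y / Q y) ^ 2) := by
          rw [← mul_assoc, hPy]
      _ ≤ Q y * (2 * κ₀ ^ 2 * (P y / Q y - 1 - Real.log (P y / Q y))) := this
      _ = 2 * κ₀ ^ 2 * (P y - Q y - Q y * Real.log (P y / Q y)) := by
          field_simp
  calc ∑ y, P y * Real.log (P y / Q y) ^ 2
      ≤ ∑ y, 2 * κ₀ ^ 2 * (P y - Q y - Q y * Real.log (P y / Q y)) :=
        Finset.sum_le_sum fun y _ => hpt y
    _ = 2 * κ₀ ^ 2 * klDiv' Q P := by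
        rw [← Finset.mul_sum, klDiv']
        congr 1
        have hlogs : ∀ y : Y, Q y * Real.log (Q y / P y)
            = -(Q y * Real.log (P y / Q y)) := by
          intro y
          have h : Real.log (Q y / P y) = -Real.log (P y / Q y) := by
            rw [← Real.log_inv, inv_div]
          rw [h]; ring
        rw [Finset.sum_sub_distrib, Finset.sum_sub_distrib, hPs, hQs]
        simp_rw [hlogs, Finset.sum_neg_distrib]
        ring
end

section
/- Let P₁,…,Pₙ and Q₁,…,Qₙ be probability distributions on a finite set Y, and let y₁,…,yₙ be independent random variables with yᵢ ∼ Pᵢ. Then for any γ ≥ 0, P{ Σᵢ log(Pᵢ(yᵢ)/Qᵢ(yᵢ)) ≤ γ } ≤ exp( −Σᵢ H²(Pᵢ,Qᵢ) + γ/2 ), where H²(P,Q) = (1/2)Σ_y(√P(y)−√Q(y))². -/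
open scoped Classical

/-- Squared Hellinger distance between two pmfs on a finite set. -/
noncomputable def hellingerSq {Y : Type*} [Fintype Y] (P Q : Y → ℝ) : ℝ :=
  (1 / 2) * ∑ y, (Real.sqrt (P y) - Real.sqrt (Q y)) ^ 2

/-- Chernoff-type bound: if `y₁,…,yₙ` are independent with `yᵢ ∼ Pᵢ`
(so the joint law of `(y₁,…,yₙ)` is the product pmf), then for any `γ ≥ 0`,
`P{ Σᵢ log(Pᵢ(yᵢ)/Qᵢ(yᵢ)) ≤ γ } ≤ exp(−Σᵢ H²(Pᵢ,Qᵢ) + γ/2)`. -/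
theorem chernoff_hellinger_tail {Y : Type*} [Fintype Y] (n : ℕ)
    (P Q : Fin n → Y → ℝ)
    (hP : ∀ i y, 0 < P i y) (hQ : ∀ i y, 0 < Q i y)
    (hPs : ∀ i, ∑ y, P i y = 1) (hQs : ∀ i, ∑ y, Q i y = 1)
    (γ : ℝ) (hγ : 0 ≤ γ) :
    (∑ ω : Fin n → Y,
        if (∑ i, Real.log (P i (ω i) / Q i (ω i))) ≤ γ then ∏ i, P i (ω i) else 0)
      ≤ Real.exp (-(∑ i, hellingerSq (P i) (Q i)) + γ / 2) := by
  classical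
  set g : Fin n → Y → ℝ := fun i y => Real.sqrt (P i y * Q i y) with hg
  -- pointwise bound on each term
  have hpoint : ∀ ω : Fin n → Y,
      (if (∑ i, Real.log (P i (ω i) / Q i (ω i))) ≤ γ then ∏ i, P i (ω i) else 0)
        ≤ Real.exp (γ / 2) * ∏ i, g i (ω i) := by
    intro ω
    split_ifs with h
    · have key : ∏ i, P i (ω i)
          = Real.exp ((∑ i, Real.log (P i (ω i) / Q i (ω i))) / 2) * ∏ i, g i (ω i) := by
        rw [Finset.sum_div, Real.exp_sum, ← Finset.prod_mul_distrib]
        refine Finset.prod_congr rfl fun i _ => ?_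
        have hp := hP i (ω i); have hq := hQ i (ω i)
        have hd : 0 < P i (ω i) / Q i (ω i) := div_pos hp hq
        rw [← Real.log_sqrt hd.le, Real.exp_log (Real.sqrt_pos.2 hd)]
        have : Real.sqrt (P i (ω i) / Q i (ω i)) * g i (ω i) = P i (ω i) := by
          rw [hg]
          rw [← Real.sqrt_mul hd.le,
            show P i (ω i) / Q i (ω i) * (P i (ω i) * Q i (ω i)) = (P i (ω i)) ^ 2 by
              field_simp]
          exact Real.sqrt_sq hp.le
        exact this.symm
      rw [key]
      have hmono : Real.exp ((∑ i, Real.log (P i (ω i) / Q i (ω i))) / 2)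
          ≤ Real.exp (γ / 2) := Real.exp_le_exp.2 (by linarith)
      have hprodnn : 0 ≤ ∏ i, g i (ω i) :=
        Finset.prod_nonneg fun i _ => Real.sqrt_nonneg _
      exact mul_le_mul_of_nonneg_right hmono hprodnn
    · positivity
  calc (∑ ω : Fin n → Y,
        if (∑ i, Real.log (P i (ω i) / Q i (ω i))) ≤ γ then ∏ i, P i (ω i) else 0)
      ≤ ∑ ω : Fin n → Y, Real.exp (γ / 2) * ∏ i, g i (ω i) :=
        Finset.sum_le_sum fun ω _ => hpoint ω
    _ = Real.exp (γ / 2) * ∑ ω : Fin n → Y, ∏ i, g i (ω i) := by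
        rw [← Finset.mul_sum]
    _ = Real.exp (γ / 2) * ∏ i, ∑ y, g i y := by
        congr 1
        rw [Finset.prod_univ_sum, Fintype.piFinset_univ]
    _ ≤ Real.exp (γ / 2) * ∏ i, Real.exp (-(hellingerSq (P i) (Q i))) := by
        have hsum : ∀ i, ∑ y, g i y = 1 - hellingerSq (P i) (Q i) := by
          intro i
          have hexp : ∀ y : Y, (Real.sqrt (P i y) - Real.sqrt (Q i y)) ^ 2
              = P i y + Q i y - 2 * g i y := by
            intro y
            have h1 : Real.sqrt (P i y) ^ 2 = P i y := Real.sq_sqrt (hP i y).le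
            have h2 : Real.sqrt (Q i y) ^ 2 = Q i y := Real.sq_sqrt (hQ i y).le
            have h3 : g i y = Real.sqrt (P i y) * Real.sqrt (Q i y) :=
              Real.sqrt_mul (hP i y).le _
            rw [h3, sub_sq, h1, h2]; ring
          unfold hellingerSq
          rw [Finset.sum_congr rfl fun y _ => hexp y]
          simp only [Finset.sum_add_distrib, Finset.sum_sub_distrib, ← Finset.mul_sum,
            hPs i, hQs i]
          ring
        refine mul_le_mul_of_nonneg_left (Finset.prod_le_prod ?_ ?_) (Real.exp_pos _).le
        · intro i _
          have h0 : 0 ≤ ∑ y, g i y := Finset.sum_nonneg fun y _ => Real.sqrt_nonneg _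
          linarith [hsum i]
        · intro i _
          rw [hsum i]
          linarith [Real.add_one_le_exp (-(hellingerSq (P i) (Q i)))]
    _ = Real.exp (-(∑ i, hellingerSq (P i) (Q i)) + γ / 2) := by
        rw [← Real.exp_sum, ← Real.exp_add]
        congr 1
        rw [← Finset.sum_neg_distrib]
        ring
end

section
/- Let P, Q be strictly positive probability distributions on a finite set Y with KL(P‖Q) ≤ ε for some 0 < ε < 1, and suppose min over y of both P(y) and Q(y) is bounded below by a positive constant c. Then Var_{y∼P}[log(P(y)/Q(y))] = 2·KL(P‖Q)·(1 + O(√ε)), i.e., there is a constant c₀ depending only on c such that |Var_{y∼P}[log(P(y)/Q(y))] − 2·KL(P‖Q)| ≤ c₀ √ε · KL(P‖Q). -/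
/-- Variance under `P` of the log-likelihood ratio `log(P(y)/Q(y))`. -/
noncomputable def varLogRatio {Y : Type*} [Fintype Y] (P Q : Y → ℝ) : ℝ :=
  ∑ y, P y * (Real.log (P y / Q y)) ^ 2 - (klDiv' P Q) ^ 2

lemma aux_phi_nonneg {u : ℝ} (hu : 0 < u) : 0 ≤ u - 1 - Real.log u := by
  have := Real.log_le_sub_one_of_pos hu; linarith

lemma aux_phi_le {u c : ℝ} (hc : 0 < c) (hcu : c ≤ u) :
    u - 1 - Real.log u ≤ (u - 1)^2 / c := by
  have hu : 0 < u := lt_of_lt_of_le hc hcu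
  have h1 : 1 - u⁻¹ ≤ Real.log u := Real.one_sub_inv_le_log_of_pos hu
  have h2 : u - 1 - Real.log u ≤ (u-1)^2 / u := by
    have h3 : u - 1 - (1 - u⁻¹) = (u-1)^2/u := by field_simp
    linarith [h3 ▸ sub_le_sub_left h1 (u-1)]
  exact h2.trans (div_le_div_of_nonneg_left (by positivity) hc hcu)

lemma aux_abs_log {u c : ℝ} (hc : 0 < c) (hc1 : c ≤ 1) (hcu : c ≤ u) :
    |Real.log u| ≤ |u - 1| / c := by
  have hu : 0 < u := lt_of_lt_of_le hc hcu
  have h1 : Real.log u ≤ u - 1 := Real.log_le_sub_one_of_pos hu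
  have h2 : 1 - u⁻¹ ≤ Real.log u := Real.one_sub_inv_le_log_of_pos hu
  have h2' : 1 - u⁻¹ = (u - 1)/u := by field_simp
  have ha1 : u - 1 ≤ |u - 1| := le_abs_self _
  have ha2 : -(u - 1) ≤ |u - 1| := neg_le_abs _
  rw [abs_le]
  constructor
  · rw [h2'] at h2
    have : -(|u-1|/c) ≤ (u-1)/u := by
      rw [neg_le, ← neg_div]
      rw [div_le_div_iff₀ hu hc]
      nlinarith [abs_nonneg (u-1)]
    linarith
  · exact h1.trans (ha1.trans (by rw [le_div_iff₀ hc]; nlinarith [abs_nonneg (u-1)]))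

lemma aux_cubic {u : ℝ} (hd : |u - 1| ≤ 1/2) :
    |Real.log u - (u-1) + (u-1)^2/2| ≤ 2 * |u-1|^3 := by
  have h0 : |1 - u| < 1 := by rw [abs_sub_comm]; linarith
  have h := Real.abs_log_sub_add_sum_range_le h0 2
  have hs : (∑ i ∈ Finset.range 2, (1-u) ^ (i + 1) / (i + 1)) = (1-u) + (1-u)^2/2 := by
    simp [Finset.sum_range_succ]; ring
  rw [hs] at h
  have hl : (1:ℝ) - (1 - u) = u := by ring
  rw [hl, abs_sub_comm (1:ℝ) u] at h
  norm_num at h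
  have hg : Real.log u - (u-1) + (u-1)^2/2 = 1 - u + (1-u)^2/2 + Real.log u := by ring
  rw [hg]
  have h12 : |u-1|^3 / (1 - |u-1|) ≤ 2 * |u-1|^3 := by
    rw [div_le_iff₀ (by linarith [abs_nonneg (u-1)] : (0:ℝ) < 1 - |u-1|)]
    nlinarith [abs_nonneg (u-1), pow_nonneg (abs_nonneg (u-1)) 3]
  exact h.trans h12

lemma aux_F' {L d c : ℝ} (hc : 0 < c) (hc1 : c ≤ 1)
    (h1 : 0 ≤ d - L) (h2 : d - L ≤ d^2/c) (h3 : |L| ≤ |d|/c)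
    (h4 : |L - d + d^2/2| ≤ 2*|d|^3) :
    |L ^ 2 + 2 * L - 2*d| ≤ 6/c^2 * |d|^3 := by
  have hc2 : (0:ℝ) < c^2 := by positivity
  have hd0 : (0:ℝ) ≤ |d| := abs_nonneg d
  have hd3 : (0:ℝ) ≤ |d|^3 := by positivity
  have key : L^2 + 2*L - 2*d = (L - d)*(L + d) + 2*(L - d + d^2/2) := by ring
  rw [key]
  have hdc : |d| ≤ |d|/c := by rw [le_div_iff₀ hc]; nlinarith
  have e1 : |(L-d)*(L+d)| ≤ (d^2/c) * (2*(|d|/c)) := by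
    rw [abs_mul]
    apply mul_le_mul _ _ (abs_nonneg _) (by positivity)
    · rw [abs_of_nonpos (by linarith)]; linarith
    · calc |L + d| ≤ |L| + |d| := abs_add_le _ _
        _ ≤ 2*(|d|/c) := by linarith
  have h6 : (d^2/c)*(2*(|d|/c)) = 2/c^2*|d|^3 := by
    field_simp; rw [← sq_abs d]; ring
  have h5 : 4*|d|^3 ≤ 4/c^2*|d|^3 := by
    rw [div_mul_eq_mul_div, le_div_iff₀ hc2]
    nlinarith [mul_nonneg hd3 (show (0:ℝ) ≤ 1 - c^2 by nlinarith)]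
  calc |(L - d)*(L + d) + 2*(L - d + d^2/2)|
      ≤ |(L-d)*(L+d)| + |2*(L - d + d^2/2)| := abs_add_le _ _
    _ ≤ 2/c^2*|d|^3 + 4*|d|^3 := by
        rw [← h6]
        have : |2*(L - d + d^2/2)| ≤ 4*|d|^3 := by
          rw [abs_mul, abs_two]; linarith
        linarith
    _ ≤ 6/c^2 * |d|^3 := by
        have : 2/c^2*|d|^3 + 4/c^2*|d|^3 = 6/c^2*|d|^3 := by ring
        linarith

lemma aux_d_sq {u c : ℝ} (hc : 0 < c) (hcu : c ≤ u) (huc : u ≤ 1/c) :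
    (u-1)^2 ≤ (1 + (Real.sqrt c)⁻¹)^2 * (u - 1 - Real.log u) := by
  have hu : 0 < u := lt_of_lt_of_le hc hcu
  have hs0 : 0 ≤ Real.sqrt u := Real.sqrt_nonneg u
  have hs : Real.sqrt u ^ 2 = u := Real.sq_sqrt hu.le
  have hphi : 0 ≤ u - 1 - Real.log u := aux_phi_nonneg hu
  have h1 : (Real.sqrt u - 1)^2 ≤ u - 1 - Real.log u := by
    have hl : Real.log u = 2 * Real.log (Real.sqrt u) := by
      rw [Real.log_sqrt hu.le]; ring
    have h2 : Real.log (Real.sqrt u) ≤ Real.sqrt u - 1 :=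
      Real.log_le_sub_one_of_pos (Real.sqrt_pos.2 hu)
    nlinarith
  have hr0 : 0 < Real.sqrt c := Real.sqrt_pos.2 hc
  have hub : Real.sqrt u ≤ (Real.sqrt c)⁻¹ := by
    have := Real.sqrt_le_sqrt huc
    rwa [one_div, Real.sqrt_inv] at this
  have heq : (u-1)^2 = (Real.sqrt u - 1)^2 * (Real.sqrt u + 1)^2 := by
    conv_lhs => rw [← hs]
    ring
  have h2 : (Real.sqrt u + 1)^2 ≤ (1 + (Real.sqrt c)⁻¹)^2 := by nlinarith
  calc (u-1)^2 = (Real.sqrt u - 1)^2 * (Real.sqrt u + 1)^2 := heq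
    _ ≤ (u - 1 - Real.log u) * (Real.sqrt u + 1)^2 :=
        mul_le_mul_of_nonneg_right h1 (by positivity)
    _ ≤ (u - 1 - Real.log u) * (1 + (Real.sqrt c)⁻¹)^2 :=
        mul_le_mul_of_nonneg_left h2 hphi
    _ = (1 + (Real.sqrt c)⁻¹)^2 * (u - 1 - Real.log u) := by ring

lemma aux_crude {S kl Mv cc : ℝ} (h1 : 0 ≤ S) (h2 : S ≤ 1/cc^4) (h3 : 0 ≤ kl)
    (h4 : kl ≤ 1) (hMv : Mv = 1/cc^4 + 3) : |S - kl^2 - 2*kl| ≤ Mv := by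
  have h5 : kl^2 ≤ 1 := pow_le_one₀ h3 h4
  have h6 := sq_nonneg kl
  rw [hMv, abs_le]
  constructor <;> linarith


/-- If `P, Q` are pmfs bounded below by `c > 0` and `KL(P‖Q) ≤ ε < 1`, then
`Var_{y∼P}[log(P(y)/Q(y))] = 2 KL(P‖Q) (1 + O(√ε))`, where the implicit
constant depends only on `c`. -/
theorem var_log_ratio_eq_two_kl (c : ℝ) (hc : 0 < c) :
    ∃ c₀ : ℝ, 0 < c₀ ∧
      ∀ (Y : Type) [Fintype Y] (P Q : Y → ℝ) (ε : ℝ),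
        (∀ y, c ≤ P y) → (∀ y, c ≤ Q y) →
        (∑ y, P y = 1) → (∑ y, Q y = 1) →
        0 < ε → ε < 1 → klDiv' P Q ≤ ε →
        |varLogRatio P Q - 2 * klDiv' P Q| ≤ c₀ * Real.sqrt ε * klDiv' P Q := by
  obtain ⟨B, hBdef⟩ : ∃ x : ℝ, x = (1 + (Real.sqrt c)⁻¹)^2 := ⟨_, rfl⟩
  have hB : 0 < B := by rw [hBdef]; positivity
  obtain ⟨t, htdef⟩ : ∃ x : ℝ, x = c / (4 * B) := ⟨_, rfl⟩
  have ht : 0 < t := by rw [htdef]; positivity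
  obtain ⟨m, hmdef⟩ : ∃ x : ℝ, x = Real.sqrt t * t := ⟨_, rfl⟩
  have hm : 0 < m := by rw [hmdef]; positivity
  obtain ⟨M, hMdef⟩ : ∃ x : ℝ, x = 1/c^4 + 3 := ⟨_, rfl⟩
  have hM : 0 < M := by rw [hMdef]; positivity
  obtain ⟨C₁, hC₁def⟩ : ∃ x : ℝ, x = 6/c^2 * B * Real.sqrt (B/c) + 1 := ⟨_, rfl⟩
  have hC₁ : 0 < C₁ := by rw [hC₁def]; positivity
  refine ⟨C₁ + M/m, by positivity, ?_⟩
  intro Y _ P Q ε hPc hQc hP1 hQ1 hε0 hε1 hKLε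
  rcases isEmpty_or_nonempty Y with hY | hY
  · rw [Finset.univ_eq_empty, Finset.sum_empty] at hP1; norm_num at hP1
  obtain ⟨y₀⟩ := hY
  have hPpos : ∀ y, 0 < P y := fun y => lt_of_lt_of_le hc (hPc y)
  have hQpos : ∀ y, 0 < Q y := fun y => lt_of_lt_of_le hc (hQc y)
  have hPle1 : ∀ y, P y ≤ 1 := by
    intro y
    rw [← hP1]
    exact Finset.single_le_sum (fun i _ => (hPpos i).le) (Finset.mem_univ y)
  have hQle1 : ∀ y, Q y ≤ 1 := by
    intro y
    rw [← hQ1]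
    exact Finset.single_le_sum (fun i _ => (hQpos i).le) (Finset.mem_univ y)
  have hc1 : c ≤ 1 := (hPc y₀).trans (hPle1 y₀)
  obtain ⟨u, hu⟩ : ∃ u : Y → ℝ, u = fun y => Q y / P y := ⟨_, rfl⟩
  have huy : ∀ y, u y = Q y / P y := fun y => by rw [hu]
  have hu_lb : ∀ y, c ≤ u y := by
    intro y
    rw [huy, le_div_iff₀ (hPpos y)]
    nlinarith [mul_nonneg hc.le (sub_nonneg.2 (hPle1 y)), hQc y]
  have hu_ub : ∀ y, u y ≤ 1/c := by
    intro y
    rw [huy, div_le_div_iff₀ (hPpos y) hc]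
    nlinarith [mul_nonneg hc.le (sub_nonneg.2 (hQle1 y)), hPc y]
  have hupos : ∀ y, 0 < u y := fun y => lt_of_lt_of_le hc (hu_lb y)
  obtain ⟨L, hL⟩ : ∃ L : Y → ℝ, L = fun y => Real.log (u y) := ⟨_, rfl⟩
  have hLy : ∀ y, L y = Real.log (u y) := fun y => by rw [hL]
  obtain ⟨d, hd⟩ : ∃ d : Y → ℝ, d = fun y => u y - 1 := ⟨_, rfl⟩
  have hdy : ∀ y, d y = u y - 1 := fun y => by rw [hd]
  have hlogneg : ∀ y, Real.log (P y / Q y) = -(L y) := by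
    intro y
    rw [hLy, huy, ← Real.log_inv]
    congr 1
    field_simp
  obtain ⟨KL, hKLdef⟩ : ∃ x : ℝ, x = klDiv' P Q := ⟨_, rfl⟩
  rw [← hKLdef] at hKLε ⊢
  have hKL_eq : KL = ∑ y, P y * (-(L y)) := by
    rw [hKLdef, klDiv']
    exact Finset.sum_congr rfl fun y _ => by rw [hlogneg y]
  have hsum_d : ∑ y, P y * d y = 0 := by
    have h0 : ∀ y, P y * d y = Q y - P y := by
      intro y
      rw [hdy, huy]
      field_simp [ne_of_gt (hPpos y)]
    rw [Finset.sum_congr rfl fun y _ => h0 y, Finset.sum_sub_distrib, hP1, hQ1, sub_self]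
  have hKL_phi : ∑ y, P y * (d y - L y) = KL := by
    have h0 : ∀ y, P y * (d y - L y) = P y * d y + P y * (-(L y)) := fun y => by ring
    rw [Finset.sum_congr rfl fun y _ => h0 y, Finset.sum_add_distrib, hsum_d, hKL_eq]
    ring
  have hphi_nonneg : ∀ y, 0 ≤ d y - L y := fun y => by
    rw [hdy, hLy]; exact aux_phi_nonneg (hupos y)
  have hKL0 : 0 ≤ KL := by
    rw [← hKL_phi]
    exact Finset.sum_nonneg fun y _ => mul_nonneg (hPpos y).le (hphi_nonneg y)
  have hsqE : Real.sqrt KL ≤ Real.sqrt ε := Real.sqrt_le_sqrt hKLε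
  have hε0' : (0:ℝ) ≤ Real.sqrt ε := Real.sqrt_nonneg ε
  have hphi_le_KL : ∀ y, d y - L y ≤ KL / c := by
    intro y
    have h1 : P y * (d y - L y) ≤ KL := by
      rw [← hKL_phi]
      exact Finset.single_le_sum
        (fun i _ => mul_nonneg (hPpos i).le (hphi_nonneg i)) (Finset.mem_univ y)
    rw [le_div_iff₀ hc]
    calc (d y - L y) * c ≤ (d y - L y) * P y :=
          mul_le_mul_of_nonneg_left (hPc y) (hphi_nonneg y)
      _ = P y * (d y - L y) := mul_comm _ _
      _ ≤ KL := h1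
  have hd_sq : ∀ y, d y ^ 2 ≤ B * (KL / c) := by
    intro y
    calc d y ^ 2 ≤ B * (d y - L y) := by
          rw [hdy, hLy, hBdef]; exact aux_d_sq hc (hu_lb y) (hu_ub y)
      _ ≤ B * (KL / c) := by gcongr; exact hphi_le_KL y
  have hvar : varLogRatio P Q - 2 * KL = (∑ y, P y * (L y ^ 2 + 2 * L y - 2 * d y)) - KL^2 := by
    rw [varLogRatio, ← hKLdef]
    have h1 : ∀ y, P y * (Real.log (P y / Q y))^2 = P y * (L y)^2 := by
      intro y; rw [hlogneg y]; ring
    have h2 : ∀ y, P y * (L y ^ 2 + 2 * L y - 2 * d y)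
        = P y * (L y)^2 - 2 * (P y * (d y - L y)) := fun y => by ring
    rw [Finset.sum_congr rfl fun y _ => h2 y, Finset.sum_sub_distrib,
        ← Finset.mul_sum, hKL_phi, Finset.sum_congr rfl fun y _ => h1 y]
    ring
  by_cases hcase : KL ≤ t
  · -- small KL case
    have hdhalf : ∀ y, |d y| ≤ 1/2 := by
      intro y
      have h1 : d y ^ 2 ≤ 1/4 := by
        calc d y ^2 ≤ B * (KL/c) := hd_sq y
          _ ≤ B * (t/c) := by gcongr
          _ = 1/4 := by rw [htdef, hBdef]; field_simp
      rw [← Real.sqrt_sq_eq_abs]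
      calc Real.sqrt (d y ^ 2) ≤ Real.sqrt (1/4) := Real.sqrt_le_sqrt h1
        _ = 1/2 := by
            rw [show (1:ℝ)/4 = (1/2)^2 by norm_num, Real.sqrt_sq (by norm_num : (0:ℝ) ≤ 1/2)]
    have hd_bd : ∀ y, |d y| ≤ Real.sqrt (B/c) * Real.sqrt KL := by
      intro y
      rw [← Real.sqrt_sq_eq_abs, ← Real.sqrt_mul (by positivity) KL]
      apply Real.sqrt_le_sqrt
      calc d y ^2 ≤ B * (KL/c) := hd_sq y
        _ = B / c * KL := by ring
    have hFb : ∀ y, |L y ^ 2 + 2 * L y - 2 * d y|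
        ≤ (6/c^2 * B * Real.sqrt (B/c) * Real.sqrt KL) * (d y - L y) := by
      intro y
      have h1 := aux_F' (L := L y) (d := d y) hc hc1 (hphi_nonneg y)
        (by
          rw [hdy, hLy]
          exact aux_phi_le hc (hu_lb y))
        (by
          rw [hdy, hLy]
          exact aux_abs_log hc hc1 (hu_lb y))
        (by
          rw [hdy, hLy]
          have h0 := hdhalf y
          rw [hdy] at h0
          exact aux_cubic (u := u y) h0)
      refine h1.trans ?_
      have h2 : |d y|^3 = |d y| * d y ^2 := by rw [← sq_abs]; ring
      have h3 : 6/c^2 * |d y|^3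
          ≤ 6/c^2 * ((Real.sqrt (B/c) * Real.sqrt KL) * (B * (d y - L y))) := by
        apply mul_le_mul_of_nonneg_left _ (by positivity)
        rw [h2]
        refine mul_le_mul (hd_bd y) ?_ (sq_nonneg _) (by positivity)
        rw [hdy, hLy, hBdef]
        exact aux_d_sq hc (hu_lb y) (hu_ub y)
      exact h3.trans (le_of_eq (by ring))
    have hsumF : |∑ y, P y * (L y ^ 2 + 2 * L y - 2 * d y)|
        ≤ (6/c^2 * B * Real.sqrt (B/c) * Real.sqrt KL) * KL := by
      calc |∑ y, P y * (L y ^ 2 + 2 * L y - 2 * d y)|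
          ≤ ∑ y, |P y * (L y ^ 2 + 2 * L y - 2 * d y)| := Finset.abs_sum_le_sum_abs _ _
        _ ≤ ∑ y, P y * ((6/c^2 * B * Real.sqrt (B/c) * Real.sqrt KL) * (d y - L y)) := by
            apply Finset.sum_le_sum
            intro y _
            rw [abs_mul, abs_of_pos (hPpos y)]
            exact mul_le_mul_of_nonneg_left (hFb y) (hPpos y).le
        _ = (6/c^2 * B * Real.sqrt (B/c) * Real.sqrt KL) * ∑ y, P y * (d y - L y) := by
            rw [Finset.mul_sum]
            exact Finset.sum_congr rfl fun y _ => by ring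
        _ = (6/c^2 * B * Real.sqrt (B/c) * Real.sqrt KL) * KL := by rw [hKL_phi]
    have hKLsq : KL^2 ≤ Real.sqrt ε * KL := by
      have h1 : ε ≤ Real.sqrt ε := by
        calc ε = Real.sqrt (ε^2) := (Real.sqrt_sq hε0.le).symm
          _ ≤ Real.sqrt ε := Real.sqrt_le_sqrt (by nlinarith)
      nlinarith
    have hfinal : |varLogRatio P Q - 2 * KL| ≤ C₁ * Real.sqrt ε * KL := by
      rw [hvar]
      have h1 : (6/c^2 * B * Real.sqrt (B/c) * Real.sqrt KL) * KL
          ≤ (6/c^2 * B * Real.sqrt (B/c)) * Real.sqrt ε * KL := by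
        calc (6/c^2 * B * Real.sqrt (B/c) * Real.sqrt KL) * KL
            ≤ (6/c^2 * B * Real.sqrt (B/c) * Real.sqrt ε) * KL := by gcongr
          _ = (6/c^2 * B * Real.sqrt (B/c)) * Real.sqrt ε * KL := by ring
      calc |(∑ y, P y * (L y ^ 2 + 2 * L y - 2 * d y)) - KL^2|
          ≤ |∑ y, P y * (L y ^ 2 + 2 * L y - 2 * d y)| + KL^2 := by
            have h := abs_sub (∑ y, P y * (L y ^ 2 + 2 * L y - 2 * d y)) (KL^2)
            rwa [abs_of_nonneg (sq_nonneg KL)] at h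
        _ ≤ (6/c^2 * B * Real.sqrt (B/c)) * Real.sqrt ε * KL + Real.sqrt ε * KL :=
            add_le_add (hsumF.trans h1) hKLsq
        _ = C₁ * Real.sqrt ε * KL := by rw [hC₁def]; ring
    refine hfinal.trans ?_
    have h2 : (0:ℝ) ≤ M/m := div_nonneg hM.le hm.le
    calc C₁ * Real.sqrt ε * KL = C₁ * (Real.sqrt ε * KL) := by ring
      _ ≤ (C₁ + M/m) * (Real.sqrt ε * KL) :=
          mul_le_mul_of_nonneg_right (le_add_of_nonneg_right h2) (mul_nonneg hε0' hKL0)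
      _ = (C₁ + M/m) * Real.sqrt ε * KL := by ring
  · -- large KL case
    push_neg at hcase
    have hmle : m ≤ Real.sqrt ε * KL := by
      calc m = Real.sqrt t * t := hmdef
        _ ≤ Real.sqrt KL * KL :=
            mul_le_mul (Real.sqrt_le_sqrt hcase.le) hcase.le ht.le (Real.sqrt_nonneg _)
        _ ≤ Real.sqrt ε * KL := mul_le_mul_of_nonneg_right hsqE hKL0
    have hcrude : |varLogRatio P Q - 2 * KL| ≤ M := by
      have hL2 : ∀ y, L y ^ 2 ≤ 1/c^4 := by
        intro y
        have h1 : |L y| ≤ |d y| / c := by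
          rw [hdy, hLy]; exact aux_abs_log hc hc1 (hu_lb y)
        have h2 : |d y| ≤ 1/c := by
          have h4 : (1:ℝ) ≤ 1/c := by rw [le_div_iff₀ hc]; linarith
          have h5 := hu_lb y
          have h6 := hu_ub y
          rw [abs_le, hdy y]
          constructor <;> linarith
        have h3 : |L y| ≤ 1/c^2 := by
          refine h1.trans ?_
          rw [div_le_div_iff₀ hc (by positivity : (0:ℝ) < c^2)]
          calc |d y| * c^2 ≤ 1/c * c^2 := by gcongr
            _ = 1 * c := by field_simp
        calc L y ^ 2 = |L y|^2 := (sq_abs _).symm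
          _ ≤ (1/c^2)^2 := pow_le_pow_left₀ (abs_nonneg _) h3 2
          _ = 1/c^4 := by ring
      have hS2 : ∑ y, P y * (Real.log (P y / Q y))^2 ≤ 1/c^4 := by
        calc ∑ y, P y * (Real.log (P y / Q y))^2
            ≤ ∑ y, P y * (1/c^4) := by
              apply Finset.sum_le_sum
              intro y _
              apply mul_le_mul_of_nonneg_left _ (hPpos y).le
              rw [hlogneg y]
              calc (-(L y))^2 = L y ^2 := by ring
                _ ≤ 1/c^4 := hL2 y
          _ = 1/c^4 := by rw [← Finset.sum_mul, hP1, one_mul]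
      have hS2nn : 0 ≤ ∑ y, P y * (Real.log (P y / Q y))^2 :=
        Finset.sum_nonneg fun y _ => mul_nonneg (hPpos y).le (sq_nonneg _)
      have hKLle : KL ≤ 1 := hKLε.trans hε1.le
      have heq : varLogRatio P Q - 2*KL
          = (∑ y, P y * (Real.log (P y / Q y))^2) - KL^2 - 2*KL := by
        rw [varLogRatio, ← hKLdef]
      rw [heq]
      exact aux_crude hS2nn hS2 hKL0 hKLle hMdef
    calc |varLogRatio P Q - 2 * KL| ≤ M := hcrude
      _ = (M/m) * m := (div_mul_cancel₀ M (ne_of_gt hm)).symm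
      _ ≤ (M/m) * (Real.sqrt ε * KL) :=
          mul_le_mul_of_nonneg_left hmle (div_nonneg hM.le hm.le)
      _ = (M/m) * Real.sqrt ε * KL := by ring
      _ = (M/m) * (Real.sqrt ε * KL) := by ring
      _ ≤ (C₁ + M/m) * (Real.sqrt ε * KL) :=
          mul_le_mul_of_nonneg_right (le_add_of_nonneg_left hC₁.le) (mul_nonneg hε0' hKL0)
      _ = (C₁ + M/m) * Real.sqrt ε * KL := by ring
end

section
/- Let P, Q be strictly positive probability distributions on a finite set Y with P(y), Q(y) ≥ c > 0 and KL(P‖Q) ≤ ε for some 0 < ε < 1. Then the squared Hellinger distance satisfies H²(P,Q) = (1/4)·KL(P‖Q)·(1 + O(√ε)), i.e., there is a constant c₀ depending only on c with |4·H²(P,Q) − KL(P‖Q)| ≤ c₀ √ε · KL(P‖Q). -/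
lemma phi_bound (x a : ℝ) (ha : 0 < a) (ha1 : a ≤ 1) (hax : a ≤ 1 + x) :
    |x ^ 2 - 2 * x + 2 * Real.log (1 + x)| ≤ (4 / a) * |x| ^ 3 := by
  have hx1 : -1 < x := by linarith
  have h1x : (0:ℝ) < 1 + x := by linarith
  rcases le_or_gt (1/2 : ℝ) x with hbig | hsmall
  · -- x ≥ 1/2 : elementary bounds
    have hup : Real.log (1 + x) ≤ x := by
      have := Real.log_le_sub_one_of_pos h1x; linarith
    have hlow : 1 - (1 + x)⁻¹ ≤ Real.log (1 + x) :=
      Real.one_sub_inv_le_log_of_pos h1x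
    have hinv : (1 + x)⁻¹ = 1 / (1 + x) := by rw [one_div]
    have hxabs : |x| = x := abs_of_pos (by linarith)
    rw [abs_le]
    constructor
    · -- lower: φ ≥ -2x³ ≥ -(4/a)x³
      have h1 : x ^ 2 - 2 * x + 2 * (1 - (1 + x)⁻¹) ≥ -(2 * x ^ 3) := by
        rw [ge_iff_le, ← sub_nonneg]
        have : x ^ 2 - 2 * x + 2 * (1 - (1 + x)⁻¹) - -(2 * x ^ 3)
            = (x ^ 2 * (2 * x ^ 2 + 3 * x - 1)) / (1 + x) := by
          field_simp; ring
        rw [this]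
        apply div_nonneg _ h1x.le
        nlinarith [sq_nonneg x]
      have h2 : (2:ℝ) ≤ 4 / a := by
        rw [le_div_iff₀ ha]; linarith
      have h3 : (0:ℝ) ≤ x ^ 3 := by positivity
      rw [hxabs]
      nlinarith
    · have h2 : x ^ 2 ≤ 2 * x ^ 3 := by nlinarith
      have h3 : (2:ℝ) ≤ 4 / a := by rw [le_div_iff₀ ha]; linarith
      have h4 : (0:ℝ) ≤ x ^ 3 := by positivity
      rw [hxabs]
      nlinarith
  · -- |x| < 1 : Taylor estimate
    have habs : |(-x)| < 1 := by
      rw [abs_lt]; constructor <;> linarith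
    have key := Real.abs_log_sub_add_sum_range_le habs 2
    simp only [Finset.sum_range_succ, Finset.sum_range_zero] at key
    have e1 : (1 : ℝ) - -x = 1 + x := by ring
    rw [e1] at key
    push_cast at key
    norm_num at key

    -- 1 - |x| ≥ a/2
    have hden : a / 2 ≤ 1 - |x| := by
      rcases le_or_gt 0 x with h0 | h0
      · rw [abs_of_nonneg h0]; linarith
      · rw [abs_of_neg h0]; linarith
    have hphi : x ^ 2 - 2 * x + 2 * Real.log (1 + x)
        = 2 * (-x + x ^ 2 / 2 + Real.log (1 + x)) := by ring
    rw [hphi, abs_mul, abs_two]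
    have h1 : |x| ^ 3 / (1 - |x|) ≤ |x| ^ 3 / (a / 2) := by
      apply div_le_div_of_nonneg_left (by positivity) (by positivity) hden
    calc 2 * |-x + x ^ 2 / 2 + Real.log (1 + x)| ≤ 2 * (|x| ^ 3 / (1 - |x|)) := by linarith
      _ ≤ 2 * (|x| ^ 3 / (a / 2)) := by linarith
      _ = 4 / a * |x| ^ 3 := by field_simp; ring

/-- If `P, Q` are pmfs bounded below by `c > 0` and `KL(P‖Q) ≤ ε < 1`, then
`H²(P,Q) = (1/4) KL(P‖Q) (1 + O(√ε))`, where the implicit constant depends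
only on `c`. -/
theorem hellingerSq_eq_quarter_kl (c : ℝ) (hc : 0 < c) :
    ∃ c₀ : ℝ, 0 < c₀ ∧
      ∀ (Y : Type) [Fintype Y] (P Q : Y → ℝ) (ε : ℝ),
        (∀ y, c ≤ P y) → (∀ y, c ≤ Q y) →
        (∑ y, P y = 1) → (∑ y, Q y = 1) →
        0 < ε → ε < 1 → klDiv' P Q ≤ ε →
        |4 * hellingerSq P Q - klDiv' P Q| ≤ c₀ * Real.sqrt ε * klDiv' P Q := by
  set c' := min c 1 with hc'def
  have hc'0 : 0 < c' := lt_min hc one_pos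
  have hc'1 : c' ≤ 1 := min_le_right _ _
  refine ⟨4 / c', by positivity, ?_⟩
  intro Y _ P Q ε hPc hQc hPsum hQsum hε0 hε1 hKLε
  have hPy : ∀ y, c' ≤ P y := fun y => le_trans (min_le_left _ _) (hPc y)
  have hQy : ∀ y, c' ≤ Q y := fun y => le_trans (min_le_left _ _) (hQc y)
  have hP0 : ∀ y, 0 < P y := fun y => lt_of_lt_of_le hc'0 (hPy y)
  have hQ0 : ∀ y, 0 < Q y := fun y => lt_of_lt_of_le hc'0 (hQy y)
  have hP1 : ∀ y, P y ≤ 1 := by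
    intro y
    rw [← hPsum]
    exact Finset.single_le_sum (fun i _ => (hP0 i).le) (Finset.mem_univ y)
  -- local functions
  set F : Y → ℝ := fun y => P y * Real.log (P y / Q y) + Q y - P y with hFdef
  set X : Y → ℝ := fun y => Real.sqrt (Q y) / Real.sqrt (P y) - 1 with hXdef
  set G : Y → ℝ := fun y => 2 * (Real.sqrt (P y) - Real.sqrt (Q y)) ^ 2 with hGdef
  -- basic per-point facts
  have hsc' : 0 < Real.sqrt c' := Real.sqrt_pos.2 hc'0
  have hsc'1 : Real.sqrt c' ≤ 1 := by
    rw [show (1:ℝ) = Real.sqrt 1 by simp]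
    exact Real.sqrt_le_sqrt hc'1
  have hpt : ∀ y, P y * X y ^ 2 ≤ F y ∧ G y = F y + P y * (X y ^ 2 - 2 * X y + 2 * Real.log (1 + X y))
      ∧ Real.sqrt c' ≤ 1 + X y := by
    intro y
    have hp := hP0 y
    have hq := hQ0 y
    have hsp : 0 < Real.sqrt (P y) := Real.sqrt_pos.2 hp
    have hsq : 0 < Real.sqrt (Q y) := Real.sqrt_pos.2 hq
    have hs : 1 + X y = Real.sqrt (Q y) / Real.sqrt (P y) := by simp [hXdef]
    have hs0 : 0 < 1 + X y := by rw [hs]; positivity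
    have hsq_eq : Real.sqrt (Q y) = (1 + X y) * Real.sqrt (P y) := by
      rw [hs]; field_simp
    have hqp : Q y = (1 + X y) ^ 2 * P y := by
      have h1 : Real.sqrt (Q y) ^ 2 = Q y := Real.sq_sqrt hq.le
      have h2 : Real.sqrt (P y) ^ 2 = P y := Real.sq_sqrt hp.le
      rw [← h1, ← h2, hsq_eq]; ring
    have hlog : Real.log (P y / Q y) = -(2 * Real.log (1 + X y)) := by
      rw [hqp, Real.log_div hp.ne' (by positivity), Real.log_mul (by positivity) hp.ne',
        Real.log_pow]
      push_cast; ring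
    refine ⟨?_, ?_, ?_⟩
    · -- P y * X y ^ 2 ≤ F y
      have hlogle : Real.log (1 + X y) ≤ X y := by
        have := Real.log_le_sub_one_of_pos hs0; linarith
      have hF : F y = P y * (2 * X y + X y ^ 2 - 2 * Real.log (1 + X y)) := by
        show P y * Real.log (P y / Q y) + Q y - P y = _
        rw [hlog]; nth_rewrite 1 [hqp]; ring
      rw [hF]
      have : X y ^ 2 ≤ 2 * X y + X y ^ 2 - 2 * Real.log (1 + X y) := by linarith
      nlinarith [hp]
    · -- G identity
      have hF : F y = P y * (2 * X y + X y ^ 2 - 2 * Real.log (1 + X y)) := by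
        show P y * Real.log (P y / Q y) + Q y - P y = _
        rw [hlog]; nth_rewrite 1 [hqp]; ring
      have hG : G y = P y * (2 * X y ^ 2) := by
        simp only [hGdef, hsq_eq]
        have h2 : Real.sqrt (P y) ^ 2 = P y := Real.sq_sqrt hp.le
        nlinarith [h2]
      rw [hG, hF]; ring
    · -- sqrt c' ≤ 1 + X y
      rw [hs, ← Real.sqrt_div hq.le]
      apply Real.sqrt_le_sqrt
      rw [le_div_iff₀ hp]
      calc c' * P y ≤ c' * 1 := by
            have := hP1 y
            nlinarith [hc'0]
        _ ≤ Q y := by rw [mul_one]; exact hQy y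
  have hF0 : ∀ y, 0 ≤ F y := by
    intro y
    have h := (hpt y).1
    nlinarith [sq_nonneg (X y), (hP0 y).le]
  have hKLsum : klDiv' P Q = ∑ y, F y := by
    simp only [klDiv', hFdef]
    rw [Finset.sum_sub_distrib, Finset.sum_add_distrib, hPsum, hQsum]
    ring
  have hKL0 : 0 ≤ klDiv' P Q := by
    rw [hKLsum]; exact Finset.sum_nonneg fun y _ => hF0 y
  have hFle : ∀ y, F y ≤ ε := by
    intro y
    calc F y ≤ ∑ z, F z := Finset.single_le_sum (fun z _ => hF0 z) (Finset.mem_univ y)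
      _ = klDiv' P Q := hKLsum.symm
      _ ≤ ε := hKLε
  have hXabs : ∀ y, |X y| ≤ Real.sqrt ε / Real.sqrt c' := by
    intro y
    have h1 : c' * X y ^ 2 ≤ ε := by
      have h2 := (hpt y).1
      have h3 : c' * X y ^ 2 ≤ P y * X y ^ 2 := by
        nlinarith [sq_nonneg (X y), hPy y]
      linarith [hFle y]
    have h4 : X y ^ 2 ≤ ε / c' := by
      rw [le_div_iff₀ hc'0]; linarith
    calc |X y| = Real.sqrt (X y ^ 2) := (Real.sqrt_sq_eq_abs _).symm
      _ ≤ Real.sqrt (ε / c') := Real.sqrt_le_sqrt h4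
      _ = Real.sqrt ε / Real.sqrt c' := Real.sqrt_div hε0.le c'
  have hpoint : ∀ y, |G y - F y| ≤ 4 / c' * Real.sqrt ε * F y := by
    intro y
    obtain ⟨h1, h2, h3⟩ := hpt y
    have hphi := phi_bound (X y) (Real.sqrt c') hsc' hsc'1 h3
    have hGF : G y - F y = P y * (X y ^ 2 - 2 * X y + 2 * Real.log (1 + X y)) := by
      rw [h2]; ring
    rw [hGF, abs_mul, abs_of_pos (hP0 y)]
    have hcube : |X y| ^ 3 = |X y| * X y ^ 2 := by
      rw [show (3:ℕ) = 1 + 2 by norm_num, pow_add, pow_one, sq_abs]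
    calc P y * |X y ^ 2 - 2 * X y + 2 * Real.log (1 + X y)|
        ≤ P y * (4 / Real.sqrt c' * |X y| ^ 3) := by
          apply mul_le_mul_of_nonneg_left hphi (hP0 y).le
      _ = 4 / Real.sqrt c' * (|X y| * (P y * X y ^ 2)) := by rw [hcube]; ring
      _ ≤ 4 / Real.sqrt c' * ((Real.sqrt ε / Real.sqrt c') * F y) := by
          apply mul_le_mul_of_nonneg_left _ (by positivity)
          exact mul_le_mul (hXabs y) h1 (mul_nonneg (hP0 y).le (sq_nonneg _)) (by positivity)
      _ = 4 / c' * Real.sqrt ε * F y := by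
          rw [show c' = Real.sqrt c' * Real.sqrt c' from (Real.mul_self_sqrt hc'0.le).symm]
          field_simp
          rw [Real.sqrt_sq hsc'.le]
  have hHsum : 4 * hellingerSq P Q = ∑ y, G y := by
    simp only [hellingerSq, hGdef]
    rw [← Finset.mul_sum]
    ring
  rw [hKLsum, hHsum, ← Finset.sum_sub_distrib]
  calc |∑ y, (G y - F y)| ≤ ∑ y, |G y - F y| := Finset.abs_sum_le_sum_abs _ _
    _ ≤ ∑ y, 4 / c' * Real.sqrt ε * F y := Finset.sum_le_sum fun y _ => hpoint y
    _ = 4 / c' * Real.sqrt ε * ∑ y, F y := by rw [← Finset.mul_sum]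
end

section
/- Let P and Q be strictly positive probability distributions on a finite set Y with both likelihood ratios bounded: max_y P(y)/Q(y) ≤ R and max_y Q(y)/P(y) ≤ R. Then (4 − log R)·H²(P,Q) ≤ KL(P‖Q) ≤ (4 + 2 log R)·H²(P,Q). -/
section KLHellingerAux

open Real

lemma klh_tanh_aux {t : ℝ} (ht : 1 ≤ t) : 2 * (t - 1) ≤ (t + 1) * Real.log t := by
  set g : ℝ → ℝ := fun t => (t + 1) * Real.log t - 2 * (t - 1) with hgdef
  have hg : ∀ x : ℝ, 0 < x → HasDerivAt g (Real.log x + (x + 1) * x⁻¹ - 2) x := by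
    intro x hx
    have h1 : HasDerivAt (fun t : ℝ => (t + 1) * Real.log t)
        (1 * Real.log x + (x + 1) * x⁻¹) x :=
      ((hasDerivAt_id x).add_const 1).mul (Real.hasDerivAt_log hx.ne')
    have h2 : HasDerivAt (fun t : ℝ => 2 * (t - 1)) (2 * 1) x :=
      ((hasDerivAt_id x).sub_const 1).const_mul 2
    exact (h1.sub h2).congr_deriv (by ring)
  have hmono : MonotoneOn g (Set.Ici (1:ℝ)) := by
    apply monotoneOn_of_deriv_nonneg (convex_Ici 1)
    · intro x hx
      exact (hg x (lt_of_lt_of_le one_pos hx)).continuousAt.continuousWithinAt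
    · intro x hx
      rw [interior_Ici] at hx
      exact (hg x (lt_trans one_pos hx)).differentiableAt.differentiableWithinAt
    · intro x hx
      rw [interior_Ici] at hx
      have hx0 : (0:ℝ) < x := lt_trans one_pos hx
      rw [(hg x hx0).deriv]
      have h3 : 1 - x⁻¹ ≤ Real.log x := Real.one_sub_inv_le_log_of_pos hx0
      have h4 : (x + 1) * x⁻¹ = 1 + x⁻¹ := by field_simp
      linarith
  have h1 : g 1 ≤ g t := hmono Set.self_mem_Ici ht ht
  simp [hgdef] at h1
  linarith

lemma klh_tanh_aux' {t : ℝ} (h0 : 0 < t) (ht : t ≤ 1) :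
    (t + 1) * Real.log t ≤ 2 * (t - 1) := by
  have h1 : 1 ≤ t⁻¹ := (one_le_inv₀ h0).mpr ht
  have h2 := klh_tanh_aux h1
  rw [Real.log_inv] at h2
  have h3 : t * t⁻¹ = 1 := mul_inv_cancel₀ h0.ne'
  nlinarith [h2, h0]

lemma klh_sinh_upper {t : ℝ} (ht : 1 ≤ t) : 2 * t * Real.log t ≤ t ^ 2 - 1 := by
  have h0 : (0:ℝ) < t := lt_of_lt_of_le one_pos ht
  have h1 : Real.log t ≤ Real.sinh (Real.log t) :=
    Real.self_le_sinh_iff.mpr (Real.log_nonneg ht)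
  rw [Real.sinh_log h0] at h1
  have h2 : t⁻¹ * t = 1 := inv_mul_cancel₀ h0.ne'
  nlinarith [h1, h0]

lemma klh_sinh_lower {t : ℝ} (h0 : 0 < t) (ht : t ≤ 1) :
    t ^ 2 - 1 ≤ 2 * t * Real.log t := by
  have h1 : Real.sinh (Real.log t) ≤ Real.log t :=
    Real.sinh_le_self_iff.mpr (Real.log_nonpos h0.le ht)
  rw [Real.sinh_log h0] at h1
  have h2 : t⁻¹ * t = 1 := inv_mul_cancel₀ h0.ne'
  nlinarith [h1, h0]

lemma klh_pointwise_upper {t : ℝ} (ht : 0 < t) :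
    2 * t ^ 2 * Real.log t - t ^ 2 + 1 ≤ (2 + 2 * |Real.log t|) * (t - 1) ^ 2 := by
  rcases le_or_gt 1 t with h1 | h1
  · rw [abs_of_nonneg (Real.log_nonneg h1)]
    have hs := klh_sinh_upper h1
    have hL : 0 ≤ Real.log t := Real.log_nonneg h1
    nlinarith [mul_nonneg (mul_nonneg (sub_nonneg.2 h1) (sub_nonneg.2 h1)) (sub_nonneg.2 h1),
      sq_nonneg (t-1),
      mul_le_mul_of_nonneg_right hs (by linarith : (0:ℝ) ≤ 2*t - 1)]
  · rw [abs_of_nonpos (Real.log_nonpos ht.le h1.le)]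
    have htan := klh_tanh_aux' ht h1.le
    nlinarith [mul_le_mul_of_nonneg_right htan (by nlinarith : (0:ℝ) ≤ 2*t^2 - 2*t + 1),
      sq_nonneg (t-1), mul_nonneg (sq_nonneg (t-1)) ht.le, ht.le,
      mul_nonneg (mul_nonneg (sq_nonneg (t-1)) (sq_nonneg (t-1))) ht.le]

lemma klh_pointwise_lower {t : ℝ} (ht : 0 < t) :
    (2 - |Real.log t|) * (t - 1) ^ 2 ≤ 2 * t ^ 2 * Real.log t - t ^ 2 + 1 := by
  rcases le_or_gt 1 t with h1 | h1
  · rw [abs_of_nonneg (Real.log_nonneg h1)]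
    have htan := klh_tanh_aux h1
    nlinarith [mul_le_mul_of_nonneg_right htan (by nlinarith : (0:ℝ) ≤ 3*t^2 - 2*t + 1),
      mul_nonneg (mul_nonneg (sub_nonneg.2 h1) (sub_nonneg.2 h1)) (sub_nonneg.2 h1),
      sq_nonneg (t-1)]
  · rw [abs_of_nonpos (Real.log_nonpos ht.le h1.le)]
    have hs := klh_sinh_lower ht h1.le
    have hub : Real.log t ≤ t - 1 := Real.log_le_sub_one_of_pos ht
    rcases le_or_gt 0 (t^2 + 2*t - 1) with h2 | h2
    · nlinarith [mul_le_mul_of_nonneg_right hs (by linarith : (0:ℝ) ≤ t^2 + 2*t - 1),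
        mul_nonneg (mul_nonneg (sub_nonneg.2 h1.le) (sub_nonneg.2 h1.le)) (sub_nonneg.2 h1.le),
        ht, mul_pos ht ht]
    · nlinarith [mul_le_mul_of_nonpos_right hub h2.le, mul_nonneg (sq_nonneg (t-1)) ht.le]

lemma klh_point {p q s : ℝ} (hp : 0 < p) (hq : 0 < q) (hs : |Real.log (p / q)| ≤ s) :
    (2 - s / 2) * (Real.sqrt p - Real.sqrt q) ^ 2 ≤ p * Real.log (p / q) - p + q ∧
      p * Real.log (p / q) - p + q ≤ (2 + s) * (Real.sqrt p - Real.sqrt q) ^ 2 := by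
  set t : ℝ := Real.sqrt p / Real.sqrt q with htdef
  have hsp : (0:ℝ) < Real.sqrt p := Real.sqrt_pos.2 hp
  have hsq : (0:ℝ) < Real.sqrt q := Real.sqrt_pos.2 hq
  have ht : 0 < t := div_pos hsp hsq
  have ht2 : t ^ 2 = p / q := by
    rw [htdef, div_pow, Real.sq_sqrt hp.le, Real.sq_sqrt hq.le]
  have hlog : Real.log (p / q) = 2 * Real.log t := by
    rw [← ht2, Real.log_pow]; push_cast; ring
  have habs : |Real.log t| ≤ s / 2 := by
    rw [hlog, abs_mul] at hs
    rw [abs_two] at hs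
    linarith
  have hq1 : q * (t - 1) ^ 2 = (Real.sqrt p - Real.sqrt q) ^ 2 := by
    have : Real.sqrt q * (t - 1) = Real.sqrt p - Real.sqrt q := by
      rw [htdef, mul_sub, mul_one, mul_div_assoc', mul_div_cancel_left₀ _ hsq.ne']
    calc q * (t - 1) ^ 2 = (Real.sqrt q * (t - 1)) ^ 2 := by
          rw [mul_pow, Real.sq_sqrt hq.le]
      _ = (Real.sqrt p - Real.sqrt q) ^ 2 := by rw [this]
  have hq2 : q * t ^ 2 = p := by
    rw [ht2]; field_simp
  have hF : q * (2 * t ^ 2 * Real.log t - t ^ 2 + 1) = p * Real.log (p / q) - p + q := by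
    rw [hlog]; linear_combination (2 * Real.log t - 1) * hq2
  constructor
  · have h1 : (2 - s / 2) * (t - 1) ^ 2 ≤ (2 - |Real.log t|) * (t - 1) ^ 2 :=
      mul_le_mul_of_nonneg_right (by linarith) (sq_nonneg _)
    have h2 := klh_pointwise_lower ht
    calc (2 - s / 2) * (Real.sqrt p - Real.sqrt q) ^ 2
        = q * ((2 - s / 2) * (t - 1) ^ 2) := by rw [← hq1]; ring
      _ ≤ q * (2 * t ^ 2 * Real.log t - t ^ 2 + 1) := by
          apply mul_le_mul_of_nonneg_left _ hq.le
          exact le_trans h1 h2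
      _ = p * Real.log (p / q) - p + q := hF
  · have h2 := klh_pointwise_upper ht
    have h1 : (2 + 2 * |Real.log t|) * (t - 1) ^ 2 ≤ (2 + s) * (t - 1) ^ 2 :=
      mul_le_mul_of_nonneg_right (by linarith) (sq_nonneg _)
    calc p * Real.log (p / q) - p + q
        = q * (2 * t ^ 2 * Real.log t - t ^ 2 + 1) := hF.symm
      _ ≤ q * ((2 + s) * (t - 1) ^ 2) := by
          apply mul_le_mul_of_nonneg_left _ hq.le
          exact le_trans h2 h1
      _ = (2 + s) * (Real.sqrt p - Real.sqrt q) ^ 2 := by rw [← hq1]; ring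

end KLHellingerAux

/-- If both likelihood ratios of the strictly positive pmfs `P, Q` are bounded
by `R`, then `(4 − log R) H²(P,Q) ≤ KL(P‖Q) ≤ (4 + 2 log R) H²(P,Q)`. -/
theorem kl_hellinger_sandwich {Y : Type*} [Fintype Y] (P Q : Y → ℝ) (R : ℝ)
    (hP : ∀ y, 0 < P y) (hQ : ∀ y, 0 < Q y)
    (hPs : ∑ y, P y = 1) (hQs : ∑ y, Q y = 1)
    (hR : 1 ≤ R)
    (hPQ : ∀ y, P y / Q y ≤ R) (hQP : ∀ y, Q y / P y ≤ R) :
    (4 - Real.log R) * hellingerSq P Q ≤ klDiv' P Q ∧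
      klDiv' P Q ≤ (4 + 2 * Real.log R) * hellingerSq P Q := by
  have habs : ∀ y, |Real.log (P y / Q y)| ≤ Real.log R := by
    intro y
    have h1 : Real.log (P y / Q y) ≤ Real.log R :=
      Real.log_le_log (div_pos (hP y) (hQ y)) (hPQ y)
    have h2 : Real.log (Q y / P y) ≤ Real.log R :=
      Real.log_le_log (div_pos (hQ y) (hP y)) (hQP y)
    have h3 : Real.log (Q y / P y) = -Real.log (P y / Q y) := by
      rw [Real.log_div (hQ y).ne' (hP y).ne', Real.log_div (hP y).ne' (hQ y).ne']
      ring
    rw [h3] at h2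
    exact abs_le.mpr ⟨by linarith, h1⟩
  have hpt := fun y => klh_point (hP y) (hQ y) (habs y)
  have hKL : klDiv' P Q = ∑ y, (P y * Real.log (P y / Q y) - P y + Q y) := by
    rw [klDiv', Finset.sum_add_distrib, Finset.sum_sub_distrib, hPs, hQs]
    ring
  constructor
  · have hco : (4 - Real.log R) * hellingerSq P Q
        = ∑ y, (2 - Real.log R / 2) * (Real.sqrt (P y) - Real.sqrt (Q y)) ^ 2 := by
      rw [hellingerSq, ← Finset.mul_sum]
      ring
    rw [hco, hKL]
    exact Finset.sum_le_sum fun y _ => (hpt y).1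
  · have hco : (4 + 2 * Real.log R) * hellingerSq P Q
        = ∑ y, (2 + Real.log R) * (Real.sqrt (P y) - Real.sqrt (Q y)) ^ 2 := by
      rw [hellingerSq, ← Finset.mul_sum]
      ring
    rw [hco, hKL]
    exact Finset.sum_le_sum fun y _ => (hpt y).2
end

section
/- Fix m ≥ 2 and let P₀ be a probability distribution on Z/mZ with m·min_y P₀(y) bounded below by a positive constant. For 0 ≤ l < m, define Pₗ(y) := P₀(y − l mod m). If KL(P₀‖P₁) = min_{1 ≤ l < m} KL(P₀‖Pₗ) (or KL(P₀‖P_{m−1}) attains this minimum), then there exists a constant C (depending only on m and the lower bound on P₀) such that max_{1 ≤ l < m} KL(P₀‖Pₗ) ≤ C · min_{1 ≤ l < m} KL(P₀‖Pₗ). -/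
lemma aux_hasDeriv1 (y : ℝ) (hy : 0 < y) :
    HasDerivAt (fun y : ℝ => y / 2 - 1 / (2 * y) - Real.log y)
      ((y - 1) ^ 2 / (2 * y ^ 2)) y := by
  have h1 : HasDerivAt (fun y : ℝ => y / 2) (1 / 2) y := (hasDerivAt_id y).div_const 2
  have h2 := (hasDerivAt_const y (1:ℝ)).div ((hasDerivAt_id y).const_mul 2)
      (by positivity : 2 * id y ≠ 0)
  have h3 := Real.hasDerivAt_log hy.ne'
  have := (h1.sub h2).sub h3
  refine this.congr_deriv ?_
  simp only [id]
  field_simp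
  ring

lemma aux_log_le (x : ℝ) (hx : 1 ≤ x) : Real.log x ≤ x / 2 - 1 / (2 * x) := by
  have mono : MonotoneOn (fun y : ℝ => y / 2 - 1 / (2 * y) - Real.log y) (Set.Ici 1) := by
    apply monotoneOn_of_deriv_nonneg (convex_Ici 1)
    · intro y hy
      have hy0 : (0:ℝ) < y := lt_of_lt_of_le one_pos hy
      exact (aux_hasDeriv1 y hy0).differentiableAt.continuousAt.continuousWithinAt
    · intro y hy
      rw [interior_Ici] at hy
      have hy0 : (0:ℝ) < y := lt_trans one_pos hy
      exact (aux_hasDeriv1 y hy0).differentiableAt.differentiableWithinAt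
    · intro y hy
      rw [interior_Ici] at hy
      have hy0 : (0:ℝ) < y := lt_trans one_pos hy
      rw [(aux_hasDeriv1 y hy0).deriv]
      positivity
  have := mono (Set.self_mem_Ici) (by exact hx) hx
  simp only [Real.log_one] at this ⊢
  nlinarith [this]

lemma aux_hasDeriv2 (y : ℝ) (hy : 0 < y) :
    HasDerivAt (fun y : ℝ => Real.log y - ((1 - 1 / y) + (1 - 1 / y) ^ 2 / 2))
      ((y - 1) ^ 2 / y ^ 3) y := by
  have h3 := Real.hasDerivAt_log hy.ne'
  have h1 := (hasDerivAt_const y (1:ℝ)).div (hasDerivAt_id y) (by simpa using hy.ne')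
  have h2 : HasDerivAt (fun y : ℝ => 1 - 1 / y)
      (0 - (0 * id y - 1 * 1) / id y ^ 2) y := (hasDerivAt_const y (1:ℝ)).sub h1
  have h4 := ((h2.pow 2).div_const 2)
  have := h3.sub (h2.add h4)
  refine this.congr_deriv ?_
  simp only [id]
  have hy' : y ≠ 0 := hy.ne'
  field_simp
  linear_combination (2 - 2 * y) * (mul_inv_cancel₀ hy')

lemma aux_log_ge (x : ℝ) (hx : 1 ≤ x) :
    (1 - 1 / x) + (1 - 1 / x) ^ 2 / 2 ≤ Real.log x := by
  have mono : MonotoneOn (fun y : ℝ => Real.log y - ((1 - 1 / y) + (1 - 1 / y) ^ 2 / 2))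
      (Set.Ici 1) := by
    apply monotoneOn_of_deriv_nonneg (convex_Ici 1)
    · intro y hy
      have hy0 : (0:ℝ) < y := lt_of_lt_of_le one_pos hy
      exact (aux_hasDeriv2 y hy0).differentiableAt.continuousAt.continuousWithinAt
    · intro y hy
      rw [interior_Ici] at hy
      have hy0 : (0:ℝ) < y := lt_trans one_pos hy
      exact (aux_hasDeriv2 y hy0).differentiableAt.differentiableWithinAt
    · intro y hy
      rw [interior_Ici] at hy
      have hy0 : (0:ℝ) < y := lt_trans one_pos hy
      rw [(aux_hasDeriv2 y hy0).deriv]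
      positivity
  have := mono (Set.self_mem_Ici) (by exact hx) hx
  simp only [Real.log_one] at this ⊢
  nlinarith [this]



lemma pt_upper {p q : ℝ} (hp : 0 < p) (hq : 0 < q) :
    p * Real.log (p / q) ≤ (p - q) + (p - q) ^ 2 / q := by
  have h := Real.log_le_sub_one_of_pos (show 0 < p / q by positivity)
  have h2 : p * Real.log (p / q) ≤ p * (p / q - 1) :=
    mul_le_mul_of_nonneg_left h hp.le
  have e : p * (p / q - 1) = (p - q) + (p - q) ^ 2 / q := by
    field_simp
    ring
  linarith [e ▸ h2]

lemma pt_lower {p q : ℝ} (hp : 0 < p) (hq : 0 < q) (hp1 : p ≤ 1) (hq1 : q ≤ 1) :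
    (p - q) ^ 2 / 2 ≤ p * Real.log (p / q) - (p - q) := by
  rcases le_total q p with hqp | hpq
  · -- q ≤ p
    have ht : 1 ≤ p / q := (one_le_div hq).mpr hqp
    have h := aux_log_ge (p / q) ht
    have h2 : p * ((1 - 1 / (p / q)) + (1 - 1 / (p / q)) ^ 2 / 2) ≤ p * Real.log (p / q) :=
      mul_le_mul_of_nonneg_left h hp.le
    have e : 1 - 1 / (p / q) = (p - q) / p := by
      rw [one_div_div]
      field_simp
    rw [e] at h2
    have e2 : p * ((p - q) / p + ((p - q) / p) ^ 2 / 2) = (p - q) + (p - q) ^ 2 / (2 * p) := by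
      field_simp
    rw [e2] at h2
    have e3 : (p - q) ^ 2 / 2 ≤ (p - q) ^ 2 / (2 * p) := by
      apply div_le_div_of_nonneg_left (sq_nonneg _) (by positivity)
      nlinarith
    linarith
  · -- p ≤ q
    have ht : 1 ≤ q / p := (one_le_div hp).mpr hpq
    have h := aux_log_le (q / p) ht
    have hlog : Real.log (p / q) = -Real.log (q / p) := by
      rw [← Real.log_inv, inv_div]
    have h2 : p * Real.log (q / p) ≤ p * (q / p / 2 - 1 / (2 * (q / p))) :=
      mul_le_mul_of_nonneg_left h hp.le
    have e : p * (q / p / 2 - 1 / (2 * (q / p))) = q / 2 - p ^ 2 / (2 * q) := by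
      field_simp
    rw [e] at h2
    rw [hlog]
    have e3 : (p - q) ^ 2 / 2 + (p - q) ≤ -(q / 2 - p ^ 2 / (2 * q)) := by
      rw [← sub_nonneg]
      have : -(q / 2 - p ^ 2 / (2 * q)) - ((p - q) ^ 2 / 2 + (p - q)) =
          (1 - q) * (p - q) ^ 2 / (2 * q) := by
        field_simp
        ring
      rw [this]
      have h1q : 0 ≤ 1 - q := by linarith
      positivity
    nlinarith [h2]

/-- KL divergence between a pmf `P₀` on `ZMod m` and its `l`-shifted version
`Pₗ(y) = P₀(y − l)`. -/
noncomputable def klShift {m : ℕ} [NeZero m] (P₀ : ZMod m → ℝ) (l : ZMod m) : ℝ :=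
  ∑ y, P₀ y * Real.log (P₀ y / P₀ (y - l))




lemma sum_shift {m : ℕ} [NeZero m] (P : ZMod m → ℝ) (l : ZMod m) :
    ∑ y, P (y - l) = ∑ y, P y :=
  Fintype.sum_equiv (Equiv.subRight l) _ _ (fun _ => rfl)

lemma klShift_eq {m : ℕ} [NeZero m] (P : ZMod m → ℝ) (hsum : ∑ y, P y = 1) (l : ZMod m) :
    klShift P l = ∑ y, (P y * Real.log (P y / P (y - l)) - (P y - P (y - l))) := by
  rw [klShift, Finset.sum_sub_distrib, Finset.sum_sub_distrib, hsum, sum_shift P l, hsum]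
  ring

lemma klShift_lower {m : ℕ} [NeZero m] (P : ZMod m → ℝ) (hpos : ∀ y, 0 < P y)
    (hsum : ∑ y, P y = 1) (l : ZMod m) (y0 : ZMod m) :
    (P y0 - P (y0 - l)) ^ 2 / 2 ≤ klShift P l := by
  have hle1 : ∀ y, P y ≤ 1 := fun y => by
    calc P y ≤ ∑ z, P z :=
          Finset.single_le_sum (fun i _ => (hpos i).le) (Finset.mem_univ y)
      _ = 1 := hsum
  rw [klShift_eq P hsum l]
  calc (P y0 - P (y0 - l)) ^ 2 / 2
      ≤ ∑ y, (P y - P (y - l)) ^ 2 / 2 :=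
        Finset.single_le_sum (f := fun y => (P y - P (y - l)) ^ 2 / 2)
          (fun i _ => by positivity) (Finset.mem_univ y0)
    _ ≤ ∑ y, (P y * Real.log (P y / P (y - l)) - (P y - P (y - l))) :=
        Finset.sum_le_sum fun y _ => pt_lower (hpos y) (hpos _) (hle1 y) (hle1 _)

lemma klShift_upper {m : ℕ} [NeZero m] (c : ℝ) (hc : 0 < c) (P : ZMod m → ℝ)
    (hpos : ∀ y, 0 < P y) (hsum : ∑ y, P y = 1) (hlow : ∀ y, c ≤ (m : ℝ) * P y)
    (l : ZMod m) :
    klShift P l ≤ ∑ y, ((m : ℝ) / c) * (P y - P (y - l)) ^ 2 := by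
  have hm0 : (0 : ℝ) < m := by
    have := NeZero.pos m
    exact_mod_cast this
  rw [klShift_eq P hsum l]
  apply Finset.sum_le_sum
  intro y _
  have h1 : P y * Real.log (P y / P (y - l)) - (P y - P (y - l))
      ≤ (P y - P (y - l)) ^ 2 / P (y - l) := by
    have := pt_upper (hpos y) (hpos (y - l))
    linarith
  refine h1.trans ?_
  have hq : c / m ≤ P (y - l) := by
    rw [div_le_iff₀ hm0]
    linarith [hlow (y - l), mul_comm ((m : ℝ)) (P (y - l))]
  have h2 : (P y - P (y - l)) ^ 2 / P (y - l) ≤ (P y - P (y - l)) ^ 2 / (c / m) :=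
    div_le_div_of_nonneg_left (sq_nonneg _) (by positivity) hq
  refine h2.trans (le_of_eq ?_)
  field_simp

lemma telescope {m : ℕ} [NeZero m] (P : ZMod m → ℝ) (s : ZMod m) (B : ℝ)
    (hB : ∀ z, |P z - P (z - s)| ≤ B) :
    ∀ k : ℕ, ∀ y, |P y - P (y - (k : ZMod m) * s)| ≤ k * B := by
  intro k
  induction k with
  | zero => intro y; simp
  | succ k ih =>
    intro y
    have e : y - ((k + 1 : ℕ) : ZMod m) * s = (y - s) - (k : ZMod m) * s := by
      push_cast; ring
    calc |P y - P (y - ((k + 1 : ℕ) : ZMod m) * s)|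
        = |P y - P ((y - s) - (k : ZMod m) * s)| := by rw [e]
      _ ≤ |P y - P (y - s)| + |P (y - s) - P ((y - s) - (k : ZMod m) * s)| :=
          abs_sub_le _ _ _
      _ ≤ B + k * B := add_le_add (hB y) (ih (y - s))
      _ = (k + 1 : ℕ) * B := by push_cast; ring

lemma main_case {m : ℕ} [NeZero m] (c : ℝ) (hc : 0 < c) (P : ZMod m → ℝ)
    (hpos : ∀ y, 0 < P y) (hsum : ∑ y, P y = 1) (hlow : ∀ y, c ≤ (m : ℝ) * P y)
    (s : ZMod m)
    (hmin : ∀ l : ZMod m, l ≠ 0 → klShift P s ≤ klShift P l)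
    (hrep : ∀ l : ZMod m, ∃ k : ℕ, k ≤ m ∧ (k : ZMod m) * s = l) :
    ∀ l l' : ZMod m, l ≠ 0 → l' ≠ 0 →
      klShift P l ≤ (2 * (m : ℝ) ^ 4 / c) * klShift P l' := by
  have hm0 : (0 : ℝ) < m := by exact_mod_cast NeZero.pos m
  intro l l' _ hl'
  set K := klShift P s with hK
  have hK0 : 0 ≤ K := le_trans (by positivity) (klShift_lower P hpos hsum s 0)
  set B := Real.sqrt (2 * K) with hBdef
  have hB : ∀ z, |P z - P (z - s)| ≤ B := by
    intro z
    have h := klShift_lower P hpos hsum s z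
    have h2 : (P z - P (z - s)) ^ 2 ≤ 2 * K := by linarith
    calc |P z - P (z - s)| = Real.sqrt ((P z - P (z - s)) ^ 2) :=
          (Real.sqrt_sq_eq_abs _).symm
      _ ≤ B := Real.sqrt_le_sqrt h2
  have hsq : ∀ y, (P y - P (y - l)) ^ 2 ≤ (m : ℝ) ^ 2 * (2 * K) := by
    intro y
    obtain ⟨k, hk, hks⟩ := hrep l
    have ht := telescope P s B hB k y
    rw [hks] at ht
    have hkm : (k : ℝ) ≤ m := by exact_mod_cast hk
    have hBnn : 0 ≤ B := Real.sqrt_nonneg _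
    have ht2 : |P y - P (y - l)| ≤ (m : ℝ) * B :=
      ht.trans (mul_le_mul_of_nonneg_right hkm hBnn)
    have hB2 : B ^ 2 = 2 * K := Real.sq_sqrt (by linarith)
    calc (P y - P (y - l)) ^ 2 = |P y - P (y - l)| ^ 2 := (sq_abs _).symm
      _ ≤ ((m : ℝ) * B) ^ 2 := by
          apply pow_le_pow_left₀ (abs_nonneg _) ht2
      _ = (m : ℝ) ^ 2 * (2 * K) := by rw [mul_pow, hB2]
  have h3 : klShift P l ≤ ∑ _y : ZMod m, ((m : ℝ) / c) * ((m : ℝ) ^ 2 * (2 * K)) := by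
    refine (klShift_upper c hc P hpos hsum hlow l).trans ?_
    apply Finset.sum_le_sum
    intro y _
    exact mul_le_mul_of_nonneg_left (hsq y) (by positivity)
  rw [Finset.sum_const, Finset.card_univ, ZMod.card] at h3
  have h4 : (m : ℝ) * ((m : ℝ) / c * ((m : ℝ) ^ 2 * (2 * K))) = (2 * (m : ℝ) ^ 4 / c) * K := by
    field_simp
  have h5 : klShift P l ≤ (2 * (m : ℝ) ^ 4 / c) * K := by
    rw [← h4]
    refine h3.trans (le_of_eq ?_)
    simp [nsmul_eq_mul]
  refine h5.trans ?_
  exact mul_le_mul_of_nonneg_left (hmin l' hl') (by positivity)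

/-- Lemma 1(1): for fixed `m` and pmfs `P₀` on `Z/mZ` with `m·min_y P₀(y)`
bounded below by `c > 0`, if the minimum of `l ↦ KL(P₀‖Pₗ)` over `l ≠ 0` is
attained at `l = 1` or `l = m − 1`, then the maximum is at most a constant
(depending only on `m` and `c`) times the minimum. -/

theorem kl_max_le_const_mul_min_of_adjacent_min
    (m : ℕ) [NeZero m] (hm : 2 ≤ m) (c : ℝ) (hc : 0 < c) :
    ∃ C : ℝ, 0 < C ∧
      ∀ P₀ : ZMod m → ℝ,
        (∀ y, 0 < P₀ y) → (∑ y, P₀ y = 1) → (∀ y, c ≤ (m : ℝ) * P₀ y) →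
        ((∀ l : ZMod m, l ≠ 0 → klShift P₀ 1 ≤ klShift P₀ l) ∨
         (∀ l : ZMod m, l ≠ 0 → klShift P₀ (-1) ≤ klShift P₀ l)) →
        ∀ l l' : ZMod m, l ≠ 0 → l' ≠ 0 → klShift P₀ l ≤ C * klShift P₀ l' := by
  have hm0 : (0 : ℝ) < m := by exact_mod_cast NeZero.pos m
  refine ⟨2 * (m : ℝ) ^ 4 / c, by positivity, ?_⟩
  intro P₀ hpos hsum hlow hminor
  rcases hminor with h1 | h1
  · apply main_case c hc P₀ hpos hsum hlow 1 h1
    intro l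
    refine ⟨l.val, (ZMod.val_lt l).le, ?_⟩
    rw [mul_one, ZMod.natCast_val, ZMod.cast_id]
  · apply main_case c hc P₀ hpos hsum hlow (-1) h1
    intro l
    refine ⟨(-l).val, (ZMod.val_lt (-l)).le, ?_⟩
    rw [ZMod.natCast_val, ZMod.cast_id]
    ring
end

section
/- Fix m ≥ 2 and let P₀ be a probability distribution on {0,…,m−1} with m·min_y P₀(y) bounded below by a positive constant, which is unimodal in the sense P₀(0) ≥ P₀(1) ≥ … ≥ P₀(⌊m/2⌋) and symmetric: P₀(y) = P₀(m−y) for 1 ≤ y < m. With Pₗ(y) := P₀(y − l mod m), one has KL(P₀‖Pₗ) ≥ (1/2)·|P₀(0) − P₀(⌊m/2⌋)|² for every 1 ≤ l < m, and hence max_{1 ≤ l < m} KL(P₀‖Pₗ) ≤ C · min_{1 ≤ l < m} KL(P₀‖Pₗ) for a constant C depending only on m and the lower bound on P₀. -/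
open Finset

private lemma telescope' (g : ℕ → ℝ) : ∀ a b : ℕ, a ≤ b →
    |g b - g a| ≤ ∑ t ∈ Finset.Ico a b, |g (t+1) - g t| := by
  intro a b hab
  induction b, hab using Nat.le_induction with
  | base => simp
  | succ b hab ih =>
    rw [Finset.sum_Ico_succ_top (by omega)]
    calc |g (b+1) - g a| ≤ |g (b+1) - g b| + |g b - g a| := abs_sub_le _ _ _
    _ ≤ (∑ t ∈ Finset.Ico a b, |g (t+1) - g t|) + |g (b+1) - g b| := by linarith

private lemma chain_bound' (g : ℕ → ℝ) (b n : ℕ) (hb : b ≤ n) :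
    |g b - g 0| + |g n - g b| ≤ ∑ t ∈ Finset.range n, |g (t+1) - g t| := by
  have h1 := telescope' g 0 b (Nat.zero_le b)
  have h2 := telescope' g b n hb
  rw [Finset.range_eq_Ico, ← Finset.sum_Ico_consecutive _ (Nat.zero_le b) hb]
  linarith

private lemma log_lb {p q : ℝ} (hp : 0 < p) (hq : 0 < q) :
    (Real.sqrt p - Real.sqrt q)^2 + (p - q) ≤ p * Real.log (p / q) := by
  have hps : 0 < Real.sqrt p := Real.sqrt_pos.2 hp
  have hqs : 0 ≤ Real.sqrt q := Real.sqrt_nonneg q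
  have h1 : Real.log (Real.sqrt (q/p)) ≤ Real.sqrt (q/p) - 1 :=
    Real.log_le_sub_one_of_pos (Real.sqrt_pos.2 (div_pos hq hp))
  have h2 : Real.log (Real.sqrt (q/p)) = (1/2) * Real.log (q/p) := by
    rw [Real.log_sqrt (div_pos hq hp).le]; ring
  have h3 : Real.log (q/p) = - Real.log (p/q) := by
    rw [← Real.log_inv]; congr 1; rw [inv_div]
  have h4 : Real.sqrt (q/p) = Real.sqrt q / Real.sqrt p := Real.sqrt_div' q hp.le
  have key : 2 - 2 * (Real.sqrt q / Real.sqrt p) ≤ Real.log (p / q) := by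
    rw [h2, h3, h4] at h1; linarith
  have key2 : (2 - 2 * (Real.sqrt q / Real.sqrt p)) * Real.sqrt p
      ≤ Real.log (p / q) * Real.sqrt p := mul_le_mul_of_nonneg_right key hps.le
  have he : (2 - 2 * (Real.sqrt q / Real.sqrt p)) * Real.sqrt p
      = 2 * Real.sqrt p - 2 * Real.sqrt q := by field_simp
  rw [he] at key2
  have hp2 : Real.sqrt p ^ 2 = p := Real.sq_sqrt hp.le
  have hq2 : Real.sqrt q ^ 2 = q := Real.sq_sqrt hq.le
  have key3 := mul_le_mul_of_nonneg_right key2 hps.le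
  nlinarith [key3]

private lemma log_ub {p q : ℝ} (hp : 0 < p) (hq : 0 < q) :
    p * Real.log (p / q) ≤ (p - q)^2 / q + (p - q) := by
  have h1 : Real.log (p/q) ≤ p/q - 1 := Real.log_le_sub_one_of_pos (div_pos hp hq)
  have h2 : p * Real.log (p/q) ≤ p * (p/q - 1) := mul_le_mul_of_nonneg_left h1 hp.le
  have h3 : p * (p/q - 1) = (p - q)^2 / q + (p - q) := by field_simp; ring
  linarith

private lemma pinsker_quarter {ι : Type*} [Fintype ι] (p q : ι → ℝ)
    (hp : ∀ i, 0 < p i) (hq : ∀ i, 0 < q i)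
    (hps : ∑ i, p i = 1) (hqs : ∑ i, q i = 1) :
    (∑ i, |p i - q i|)^2 ≤ 4 * ∑ i, p i * Real.log (p i / q i) := by
  have hT : ∑ i, (Real.sqrt (p i) - Real.sqrt (q i))^2 ≤ ∑ i, p i * Real.log (p i / q i) := by
    have := Finset.sum_le_sum (fun i (_ : i ∈ univ) => log_lb (hp i) (hq i))
    rw [Finset.sum_add_distrib, Finset.sum_sub_distrib, hps, hqs] at this
    linarith
  have hCS := Finset.sum_mul_sq_le_sq_mul_sq Finset.univ
      (fun i => |Real.sqrt (p i) - Real.sqrt (q i)|)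
      (fun i => Real.sqrt (p i) + Real.sqrt (q i))
  have hfg : ∀ i, |Real.sqrt (p i) - Real.sqrt (q i)| * (Real.sqrt (p i) + Real.sqrt (q i))
      = |p i - q i| := by
    intro i
    have h1 : 0 ≤ Real.sqrt (p i) + Real.sqrt (q i) :=
      add_nonneg (Real.sqrt_nonneg _) (Real.sqrt_nonneg _)
    rw [← abs_of_nonneg h1, ← abs_mul]
    congr 1
    have := Real.sq_sqrt (hp i).le
    have := Real.sq_sqrt (hq i).le
    nlinarith
  have hG : ∑ i, (Real.sqrt (p i) + Real.sqrt (q i))^2 ≤ 4 := by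
    have h1 : ∀ i ∈ Finset.univ, (Real.sqrt (p i) + Real.sqrt (q i))^2 ≤ 2 * p i + 2 * q i := by
      intro i _
      have h2 := Real.sq_sqrt (hp i).le
      have h3 := Real.sq_sqrt (hq i).le
      nlinarith [sq_nonneg (Real.sqrt (p i) - Real.sqrt (q i))]
    calc ∑ i, (Real.sqrt (p i) + Real.sqrt (q i))^2 ≤ ∑ i, (2 * p i + 2 * q i) :=
          Finset.sum_le_sum h1
    _ = 4 := by rw [Finset.sum_add_distrib, ← Finset.mul_sum, ← Finset.mul_sum, hps, hqs]; norm_num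
  simp only [hfg] at hCS
  have hsq : ∀ i, |Real.sqrt (p i) - Real.sqrt (q i)|^2 = (Real.sqrt (p i) - Real.sqrt (q i))^2 :=
    fun i => sq_abs _
  simp only [hsq] at hCS
  have hT0 : 0 ≤ ∑ i, (Real.sqrt (p i) - Real.sqrt (q i))^2 :=
    Finset.sum_nonneg fun i _ => sq_nonneg _
  calc (∑ i, |p i - q i|)^2
      ≤ (∑ i, (Real.sqrt (p i) - Real.sqrt (q i))^2) * ∑ i, (Real.sqrt (p i) + Real.sqrt (q i))^2 := hCS
  _ ≤ (∑ i, p i * Real.log (p i / q i)) * 4 := by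
      apply mul_le_mul hT hG (Finset.sum_nonneg fun i _ => sq_nonneg _) (le_trans hT0 hT)
  _ = 4 * ∑ i, p i * Real.log (p i / q i) := by ring

private lemma kl_ub {ι : Type*} [Fintype ι] (p q : ι → ℝ)
    (hp : ∀ i, 0 < p i) (hq : ∀ i, 0 < q i)
    (hps : ∑ i, p i = 1) (hqs : ∑ i, q i = 1) :
    ∑ i, p i * Real.log (p i / q i) ≤ ∑ i, (p i - q i)^2 / q i := by
  have h := Finset.sum_le_sum (fun i (_ : i ∈ Finset.univ) => log_ub (hp i) (hq i))
  rw [Finset.sum_add_distrib, Finset.sum_sub_distrib, hps, hqs] at h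
  linarith

private lemma sum_image_le {m : ℕ} [NeZero m] (F : ZMod m → ℝ) (hF : ∀ y, 0 ≤ F y)
    (K : ℕ) (e : ℕ → ZMod m)
    (hinj : ∀ t₁ ∈ Finset.range K, ∀ t₂ ∈ Finset.range K, e t₁ = e t₂ → t₁ = t₂) :
    ∑ t ∈ Finset.range K, F (e t) ≤ ∑ y : ZMod m, F y := by
  rw [← Finset.sum_image hinj]
  exact Finset.sum_le_sum_of_subset_of_nonneg (Finset.subset_univ _) (fun y _ _ => hF y)

private lemma sum_image_le2 {m : ℕ} [NeZero m] (F : ZMod m → ℝ) (hF : ∀ y, 0 ≤ F y)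
    (K : ℕ) (e₁ e₂ : ℕ → ZMod m)
    (hinj₁ : ∀ t₁ ∈ Finset.range K, ∀ t₂ ∈ Finset.range K, e₁ t₁ = e₁ t₂ → t₁ = t₂)
    (hinj₂ : ∀ t₁ ∈ Finset.range K, ∀ t₂ ∈ Finset.range K, e₂ t₁ = e₂ t₂ → t₁ = t₂)
    (hdisj : ∀ t₁ ∈ Finset.range K, ∀ t₂ ∈ Finset.range K, e₁ t₁ ≠ e₂ t₂) :
    (∑ t ∈ Finset.range K, F (e₁ t)) + (∑ t ∈ Finset.range K, F (e₂ t))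
      ≤ ∑ y : ZMod m, F y := by
  rw [← Finset.sum_image hinj₁, ← Finset.sum_image hinj₂]
  have hd : Disjoint ((Finset.range K).image e₁) ((Finset.range K).image e₂) := by
    rw [Finset.disjoint_left]
    rintro a ha₁ ha₂
    rw [Finset.mem_image] at ha₁ ha₂
    obtain ⟨t₁, ht₁, rfl⟩ := ha₁
    obtain ⟨t₂, ht₂, he⟩ := ha₂
    exact hdisj t₁ ht₁ t₂ ht₂ he.symm
  rw [← Finset.sum_union hd]
  exact Finset.sum_le_sum_of_subset_of_nonneg (Finset.subset_univ _) (fun y _ _ => hF y)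

private lemma tv_lower (m : ℕ) [NeZero m] (hm : 2 ≤ m) (P : ZMod m → ℝ)
    (hnd : ∀ x y : ZMod m, min x.val (m - x.val) ≤ min y.val (m - y.val) → P y ≤ P x)
    (l : ZMod m) (hl : l ≠ 0) :
    2 * (P 0 - P ((m / 2 : ℕ) : ZMod m)) ≤ ∑ y : ZMod m, |P y - P (y - l)| := by
  have hm0 : 0 < m := by omega
  have hl_cast : ((l.val : ℕ) : ZMod m) = l := ZMod.natCast_zmod_val l
  set lv := l.val with hlv_def
  have hlv0 : 0 < lv := by
    rcases Nat.eq_zero_or_pos lv with h | h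
    · exact absurd (by rw [← hl_cast, h]; simp) hl
    · exact h
  have hlvm : lv < m := ZMod.val_lt l
  set d := Nat.gcd m lv with hd_def
  have hd0 : 0 < d := Nat.gcd_pos_of_pos_left lv hm0
  have hdm : d ∣ m := Nat.gcd_dvd_left m lv
  have hdl : d ∣ lv := Nat.gcd_dvd_right m lv
  have hdlt : d < m := lt_of_le_of_lt (Nat.le_of_dvd hlv0 hdl) hlvm
  set K := m / d with hK_def
  have hdK : d * K = m := Nat.mul_div_cancel' hdm
  have hK2 : 2 ≤ K := by
    rcases Nat.lt_or_ge K 2 with h | h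
    · interval_cases K <;> omega
    · exact h
  have h2d : 2 * d ≤ m := by
    have := Nat.mul_le_mul_left d hK2
    omega
  -- K * l = 0
  have hKl : ((K : ℕ) : ZMod m) * l = 0 := by
    rw [← hl_cast, ← Nat.cast_mul, ZMod.natCast_eq_zero_iff]
    obtain ⟨lv', hlv'⟩ := hdl
    exact ⟨lv', by rw [hlv', ← hdK]; ring⟩
  -- injectivity of multiples
  have inj0 : ∀ j : ℕ, j < K → ((j : ℕ) : ZMod m) * l = 0 → j = 0 := by
    intro j hjK hj0
    rw [← hl_cast, ← Nat.cast_mul, ZMod.natCast_eq_zero_iff] at hj0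
    obtain ⟨lv', hlv'⟩ := hdl
    have hcop : Nat.Coprime K (lv / d) := Nat.coprime_div_gcd_div_gcd hd0
    have hlvd : lv / d = lv' := by rw [hlv']; exact Nat.mul_div_cancel_left _ hd0
    have hKj : K ∣ j * lv' := by
      have h1 : d * K ∣ d * (j * lv') := by
        rw [hdK, show d * (j * lv') = j * (d * lv') by ring, ← hlv']; exact hj0
      exact (Nat.mul_dvd_mul_iff_left hd0).mp h1
    rw [hlvd] at hcop
    exact Nat.eq_zero_of_dvd_of_lt (hcop.dvd_of_dvd_mul_right hKj) hjK
  -- existence of discrete log for multiples of d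
  have exb : ∀ n : ℕ, d ∣ n → ∃ b : ℕ, b < K ∧ ((b : ℕ) : ZMod m) * l = (n : ZMod m) := by
    intro n hdn
    obtain ⟨n', rfl⟩ := hdn
    have hbz : (d : ℤ) = m * Nat.gcdA m lv + lv * Nat.gcdB m lv := Nat.gcd_eq_gcd_ab m lv
    set z : ℤ := (n' : ℤ) * Nat.gcdB m lv with hz_def
    have hz : ((z : ℤ) : ZMod m) * l = ((d * n' : ℕ) : ZMod m) := by
      rw [← hl_cast]
      have h5 : ((d * n' : ℕ) : ℤ) = m * (Nat.gcdA m lv * n') + (z * lv) := by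
        push_cast
        linear_combination (n' : ℤ) * hbz
      calc ((z : ℤ) : ZMod m) * ((lv : ℕ) : ZMod m) = (((z * lv : ℤ)) : ZMod m) := by
            push_cast; ring
      _ = ((d * n' : ℕ) : ZMod m) := by
            rw [show ((d * n' : ℕ) : ZMod m) = (((d * n' : ℕ) : ℤ) : ZMod m) by push_cast; ring,
              h5]
            push_cast [ZMod.natCast_self]
            ring
    have hKz : (0 : ℤ) < (K : ℤ) := by exact_mod_cast by omega
    set b : ℕ := (z % (K : ℤ)).toNat with hb_def
    have hbnn : (0 : ℤ) ≤ z % (K : ℤ) := Int.emod_nonneg z (by omega)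
    have hbz' : (b : ℤ) = z % (K : ℤ) := Int.toNat_of_nonneg hbnn
    have hbK : b < K := by
      have h1 : z % (K : ℤ) < (K : ℤ) := Int.emod_lt_of_pos z hKz
      omega
    refine ⟨b, hbK, ?_⟩
    have h3 : z = (K : ℤ) * (z / (K : ℤ)) + (b : ℤ) := by
      rw [hbz']; exact (Int.mul_ediv_add_emod z (K : ℤ)).symm
    have h7 : (((z - (b:ℤ)) : ℤ) : ZMod m) * l = 0 := by
      have he : z - (b:ℤ) = (K:ℤ) * (z / (K:ℤ)) := by linarith [h3]
      rw [he]
      calc (((K:ℤ) * (z / (K:ℤ)) : ℤ) : ZMod m) * l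
          = ((z / (K:ℤ) : ℤ) : ZMod m) * (((K:ℕ) : ZMod m) * l) := by push_cast; ring
        _ = 0 := by rw [hKl, mul_zero]
    have h6 : ((z : ℤ) : ZMod m) * l = ((b:ℕ) : ZMod m) * l := by
      have h8 : ((z : ℤ) : ZMod m) * l - ((b:ℕ) : ZMod m) * l
          = (((z - (b:ℤ)) : ℤ) : ZMod m) * l := by push_cast; ring
      have h9 := h8.trans h7
      linear_combination h9
    rw [← h6, hz]
  -- divisibility from being a multiple of l
  haveI : NeZero d := ⟨hd0.ne'⟩
  have dvd_of_eq : ∀ (n : ℕ) (w : ZMod m), (n : ZMod m) = w * l → d ∣ n := by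
    intro n w h
    have hφ := congrArg (ZMod.castHom hdm (ZMod d)) h
    rw [map_mul, map_natCast] at hφ
    have hφl : (ZMod.castHom hdm (ZMod d)) l = 0 := by
      rw [← hl_cast, map_natCast, ZMod.natCast_eq_zero_iff]; exact hdl
    rw [hφl, mul_zero] at hφ
    exact (ZMod.natCast_eq_zero_iff n d).mp hφ
  -- injectivity of the chain maps
  have einj : ∀ x₀ : ZMod m, ∀ t₁ ∈ Finset.range K, ∀ t₂ ∈ Finset.range K,
      x₀ + ((t₁ + 1 : ℕ) : ZMod m) * l = x₀ + ((t₂ + 1 : ℕ) : ZMod m) * l → t₁ = t₂ := by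
    have key : ∀ a b : ℕ, a ≤ b → b < K →
        ((b + 1 : ℕ) : ZMod m) * l = ((a + 1 : ℕ) : ZMod m) * l → b = a := by
      intro a b hab hbK h
      have hc : ((b - a : ℕ) : ZMod m) * l = 0 := by
        rw [Nat.cast_sub hab, sub_mul]
        rw [show ((b:ℕ) : ZMod m) * l - ((a:ℕ) : ZMod m) * l
            = ((b+1:ℕ) : ZMod m) * l - ((a+1:ℕ) : ZMod m) * l by push_cast; ring, h, sub_self]
      have := inj0 (b - a) (by omega) hc
      omega
    intro x₀ t₁ ht₁ t₂ ht₂ h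
    rw [Finset.mem_range] at ht₁ ht₂
    have h' : ((t₁ + 1 : ℕ) : ZMod m) * l = ((t₂ + 1 : ℕ) : ZMod m) * l := by
      have := add_left_cancel h; exact this
    rcases le_total t₁ t₂ with hle | hle
    · exact (key t₁ t₂ hle ht₂ h'.symm).symm
    · exact key t₂ t₁ hle ht₁ h'
  -- the midpoint
  set μn := m / 2 with hμn
  set q := μn / d with hq_def
  set r := μn % d with hr_def
  have hqr : d * q + r = μn := Nat.div_add_mod μn d
  have hrd : r < d := Nat.mod_lt _ hd0
  set F : ZMod m → ℝ := fun y => |P y - P (y - l)| with hF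
  have hF0 : ∀ y, 0 ≤ F y := fun y => abs_nonneg _
  have hstep : ∀ (x₀ : ZMod m) (t : ℕ),
      F (x₀ + ((t + 1 : ℕ) : ZMod m) * l)
        = |P (x₀ + ((t + 1 : ℕ) : ZMod m) * l) - P (x₀ + ((t : ℕ) : ZMod m) * l)| := by
    intro x₀ t
    rw [hF]
    congr 2
    push_cast
    ring
  by_cases hr0 : r = 0
  · -- single chain case : the midpoint is a multiple of l
    obtain ⟨b, hbK, hb⟩ := exb μn ⟨q, by omega⟩
    set g : ℕ → ℝ := fun t => P (((t : ℕ) : ZMod m) * l) with hg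
    have hchain := chain_bound' g b K hbK.le
    have hg0 : g 0 = P 0 := by rw [hg]; norm_num
    have hgK : g K = P 0 := by rw [hg]; simp only [hKl]
    have hgb : g b = P ((μn : ℕ) : ZMod m) := by rw [hg]; simp only [hb]
    have hsum : ∑ t ∈ Finset.range K, |g (t + 1) - g t| ≤ ∑ y : ZMod m, F y := by
      have h1 := sum_image_le F hF0 K (fun t => (0 : ZMod m) + ((t + 1 : ℕ) : ZMod m) * l)
        (einj 0)
      refine le_trans (le_of_eq ?_) h1
      apply Finset.sum_congr rfl
      intro t _
      rw [hstep 0 t, hg]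
      simp only [zero_add]
    have h2 : 2 * (P 0 - P ((μn : ℕ) : ZMod m)) ≤ |g b - g 0| + |g K - g b| := by
      rw [hg0, hgK, hgb]
      have := le_abs_self (P ((μn : ℕ) : ZMod m) - P 0)
      have := neg_abs_le (P ((μn : ℕ) : ZMod m) - P 0)
      have := le_abs_self (P 0 - P ((μn : ℕ) : ZMod m))
      have := neg_abs_le (P 0 - P ((μn : ℕ) : ZMod m))
      linarith
    calc 2 * (P 0 - P ((μn : ℕ) : ZMod m)) ≤ |g b - g 0| + |g K - g b| := h2
      _ ≤ ∑ t ∈ Finset.range K, |g (t + 1) - g t| := hchain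
      _ ≤ ∑ y : ZMod m, F y := hsum
  · -- two-chain case
    have hdμ : d ≤ μn := by omega
    -- choose the good multiple of d
    have hDex : ∃ D : ℕ, d ∣ D ∧ D < m ∧
        P ((D : ℕ) : ZMod m) ≤ P (((μn : ℕ) : ZMod m) - ((D : ℕ) : ZMod m)) := by
      by_cases h2r : 2 * r ≤ d
      · refine ⟨d * q, ⟨q, rfl⟩, by omega, ?_⟩
        apply hnd
        have h2 : (((μn : ℕ) : ZMod m) - ((d * q : ℕ) : ZMod m)) = ((r : ℕ) : ZMod m) := by
          rw [show (r : ℕ) = μn - d * q by omega,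
            Nat.cast_sub (show d * q ≤ μn by omega)]
        rw [h2, ZMod.val_cast_of_lt (show d * q < m by omega),
          ZMod.val_cast_of_lt (show r < m by omega)]
        omega
      · have he1 : d * (q + 1) = μn + (d - r) := by
          have : d * (q + 1) = d * q + d := by ring
          omega
        refine ⟨d * (q + 1), ⟨q + 1, rfl⟩, by omega, ?_⟩
        apply hnd
        have h2 : (((μn : ℕ) : ZMod m) - ((d * (q + 1) : ℕ) : ZMod m))
            = ((m - (d - r) : ℕ) : ZMod m) := by
          rw [Nat.cast_sub (show d - r ≤ m by omega), ZMod.natCast_self, he1,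
            Nat.cast_add]
          ring
        rw [h2, ZMod.val_cast_of_lt (show d * (q + 1) < m by omega),
          ZMod.val_cast_of_lt (show m - (d - r) < m by omega)]
        omega
    obtain ⟨D, hdD, hDm, hPD⟩ := hDex
    obtain ⟨b, hbK, hb⟩ := exb D hdD
    set p₁ : ZMod m := ((D : ℕ) : ZMod m) with hp₁
    set p₂ : ZMod m := ((μn : ℕ) : ZMod m) - p₁ with hp₂
    set g₁ : ℕ → ℝ := fun t => P (((t : ℕ) : ZMod m) * l) with hg₁
    set g₂ : ℕ → ℝ := fun t => P (p₂ + ((t : ℕ) : ZMod m) * l) with hg₂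
    have hch₁ := chain_bound' g₁ b K hbK.le
    have hch₂ := chain_bound' g₂ b K hbK.le
    have hg₁0 : g₁ 0 = P 0 := by rw [hg₁]; norm_num
    have hg₁K : g₁ K = P 0 := by rw [hg₁]; simp only [hKl]
    have hg₁b : g₁ b = P p₁ := by rw [hg₁]; simp only [hb, hp₁]
    have hg₂0 : g₂ 0 = P p₂ := by rw [hg₂]; norm_num
    have hg₂K : g₂ K = P p₂ := by rw [hg₂]; simp only [hKl, mul_zero, add_zero]
    have hg₂b : g₂ b = P ((μn : ℕ) : ZMod m) := by
      rw [hg₂]; simp only [hb]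
      congr 1
      rw [hp₂]
      ring
    -- disjointness
    have hdisj : ∀ t₁ ∈ Finset.range K, ∀ t₂ ∈ Finset.range K,
        (0 : ZMod m) + ((t₁ + 1 : ℕ) : ZMod m) * l ≠ p₂ + ((t₂ + 1 : ℕ) : ZMod m) * l := by
      intro t₁ _ t₂ _ hcontra
      have hμeq : ((μn : ℕ) : ZMod m)
          = (((t₁ + 1 : ℕ) : ZMod m) - ((t₂ + 1 : ℕ) : ZMod m) + ((b : ℕ) : ZMod m)) * l := by
        have h1 : p₂ = ((t₁ + 1 : ℕ) : ZMod m) * l - ((t₂ + 1 : ℕ) : ZMod m) * l := by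
          linear_combination -hcontra
        have h2 : ((μn : ℕ) : ZMod m) = p₂ + p₁ := by rw [hp₂]; ring
        rw [h2, h1, ← hb]
        ring
      have hdvd := dvd_of_eq μn _ hμeq
      have hdr : d ∣ r := by
        have hdq : d ∣ d * q := ⟨q, rfl⟩
        omega
      omega
    have hsum : (∑ t ∈ Finset.range K, |g₁ (t + 1) - g₁ t|)
        + (∑ t ∈ Finset.range K, |g₂ (t + 1) - g₂ t|) ≤ ∑ y : ZMod m, F y := by
      have h1 := sum_image_le2 F hF0 K
        (fun t => (0 : ZMod m) + ((t + 1 : ℕ) : ZMod m) * l)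
        (fun t => p₂ + ((t + 1 : ℕ) : ZMod m) * l)
        (einj 0) (einj p₂) hdisj
      refine le_trans (le_of_eq ?_) h1
      congr 1
      · apply Finset.sum_congr rfl
        intro t _
        rw [hstep 0 t, hg₁]
        simp only [zero_add]
      · apply Finset.sum_congr rfl
        intro t _
        rw [hstep p₂ t, hg₂]
    have habs : 2 * (P 0 - P ((μn : ℕ) : ZMod m))
        ≤ (|g₁ b - g₁ 0| + |g₁ K - g₁ b|) + (|g₂ b - g₂ 0| + |g₂ K - g₂ b|) := by
      rw [hg₁0, hg₁K, hg₁b, hg₂0, hg₂K, hg₂b]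
      have h1 := le_abs_self (P 0 - P p₁)
      have h2 := neg_abs_le (P p₁ - P 0)
      have h3 := le_abs_self (P p₂ - P ((μn : ℕ) : ZMod m))
      have h4 := neg_abs_le (P ((μn : ℕ) : ZMod m) - P p₂)
      have h5 := abs_sub_comm (P p₁) (P 0)
      have h6 := abs_sub_comm (P ((μn : ℕ) : ZMod m)) (P p₂)
      linarith
    linarith



/-- Lemma 1(2): for a symmetric unimodal pmf `P₀` on `Z/mZ` with
`m·min_y P₀(y)` bounded below by `c > 0`, every shifted KL divergence is at
least `½ |P₀(0) − P₀(⌊m/2⌋)|²`, and consequently the maximal KL divergence is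
at most a constant (depending only on `m` and `c`) times the minimal one. -/
theorem kl_comparable_of_unimodal
    (m : ℕ) [NeZero m] (hm : 2 ≤ m) (c : ℝ) (hc : 0 < c) :
    ∃ C : ℝ, 0 < C ∧
      ∀ P₀ : ZMod m → ℝ,
        (∀ y, 0 < P₀ y) → (∑ y, P₀ y = 1) → (∀ y, c ≤ (m : ℝ) * P₀ y) →
        (∀ k : ℕ, k + 1 ≤ m / 2 → P₀ ((k + 1 : ℕ) : ZMod m) ≤ P₀ ((k : ℕ) : ZMod m)) →
        (∀ y : ZMod m, P₀ (-y) = P₀ y) →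
        ((∀ l : ZMod m, l ≠ 0 →
            (1 / 2) * |P₀ 0 - P₀ ((m / 2 : ℕ) : ZMod m)| ^ 2 ≤ klShift P₀ l) ∧
         ∀ l l' : ZMod m, l ≠ 0 → l' ≠ 0 → klShift P₀ l ≤ C * klShift P₀ l') := by
  have hm0 : (0 : ℝ) < (m : ℝ) := by exact_mod_cast (show 0 < m by omega)
  refine ⟨2 * (m : ℝ) ^ 2 / c, div_pos (mul_pos two_pos (pow_pos hm0 2)) hc, ?_⟩
  intro P hpos hsum hlb hmono hsym
  -- monotonicity along distances
  have mono_nat : ∀ j : ℕ, j ≤ m / 2 → ∀ i : ℕ, i ≤ j →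
      P ((j : ℕ) : ZMod m) ≤ P ((i : ℕ) : ZMod m) := by
    intro j
    induction j with
    | zero => intro _ i hi; interval_cases i; exact le_refl _
    | succ j ih =>
      intro hj i hi
      rcases Nat.eq_or_lt_of_le hi with h | h
      · rw [h]
      · exact le_trans (hmono j hj) (ih (by omega) i (by omega))
  have hcast : ∀ x : ZMod m, ((x.val : ℕ) : ZMod m) = x := ZMod.natCast_zmod_val
  have hPnd : ∀ x : ZMod m, P x = P ((min x.val (m - x.val) : ℕ) : ZMod m) := by
    intro x
    rcases le_total x.val (m - x.val) with h | h
    · rw [min_eq_left h, hcast]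
    · rw [min_eq_right h]
      have hx : ((m - x.val : ℕ) : ZMod m) = -x := by
        rw [Nat.cast_sub (ZMod.val_lt x).le, ZMod.natCast_self, hcast]; ring
      rw [hx, hsym]
  have hnd : ∀ x y : ZMod m, min x.val (m - x.val) ≤ min y.val (m - y.val) → P y ≤ P x := by
    intro x y h
    rw [hPnd x, hPnd y]
    exact mono_nat _ (by have := ZMod.val_lt y; omega) _ h
  have hμval : (((m / 2 : ℕ) : ZMod m)).val = m / 2 := ZMod.val_cast_of_lt (by omega)
  have hmax : ∀ y, P y ≤ P 0 := by
    intro y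
    apply hnd 0 y
    have h0 : (0 : ZMod m).val = 0 := ZMod.val_zero
    have := ZMod.val_lt y
    omega
  have hmin : ∀ y, P ((m / 2 : ℕ) : ZMod m) ≤ P y := by
    intro y
    apply hnd y _
    have := ZMod.val_lt y
    omega
  have hΔ0 : 0 ≤ P 0 - P ((m / 2 : ℕ) : ZMod m) := by linarith [hmin 0]
  have habs : |P 0 - P ((m / 2 : ℕ) : ZMod m)| = P 0 - P ((m / 2 : ℕ) : ZMod m) :=
    abs_of_nonneg hΔ0
  have hqsum : ∀ l : ZMod m, ∑ y, P (y - l) = 1 := by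
    intro l
    rw [← hsum]
    exact Fintype.sum_equiv (Equiv.subRight l) _ _ (fun y => rfl)
  have part1 : ∀ l : ZMod m, l ≠ 0 →
      (1 / 2) * |P 0 - P ((m / 2 : ℕ) : ZMod m)| ^ 2 ≤ klShift P l := by
    intro l hl
    have htv := tv_lower m hm P hnd l hl
    have hcs := pinsker_quarter (fun y => P y) (fun y => P (y - l)) hpos
      (fun y => hpos _) hsum (hqsum l)
    rw [habs]
    have hS0 : 0 ≤ ∑ y : ZMod m, |P y - P (y - l)| :=
      Finset.sum_nonneg fun y _ => abs_nonneg _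
    have hkl : klShift P l = ∑ y, P y * Real.log (P y / P (y - l)) := rfl
    rw [hkl]
    nlinarith [htv, hcs, hΔ0, hS0]
  refine ⟨part1, ?_⟩
  intro l l' hl hl'
  have h1 := part1 l' hl'
  have hub : klShift P l ≤ ∑ y : ZMod m, (P y - P (y - l)) ^ 2 / P (y - l) := by
    have := kl_ub (fun y => P y) (fun y => P (y - l)) hpos (fun y => hpos _) hsum (hqsum l)
    exact this
  have hbound : ∀ y : ZMod m, (P y - P (y - l)) ^ 2 / P (y - l)
      ≤ (m : ℝ) / c * (P 0 - P ((m / 2 : ℕ) : ZMod m)) ^ 2 := by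
    intro y
    have hq := hpos (y - l)
    have h2 : |P y - P (y - l)| ≤ P 0 - P ((m / 2 : ℕ) : ZMod m) :=
      abs_le.mpr ⟨by linarith [hmax (y - l), hmin y], by linarith [hmax y, hmin (y - l)]⟩
    have h3 : (P y - P (y - l)) ^ 2 ≤ (P 0 - P ((m / 2 : ℕ) : ZMod m)) ^ 2 := by
      have hsq := sq_abs (P y - P (y - l))
      nlinarith [abs_nonneg (P y - P (y - l))]
    have h4 : 1 ≤ (m : ℝ) / c * P (y - l) := by
      rw [div_mul_eq_mul_div, le_div_iff₀ hc, one_mul]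
      exact hlb (y - l)
    rw [div_le_iff₀ hq]
    nlinarith [mul_le_mul_of_nonneg_left h4 (sq_nonneg (P 0 - P ((m / 2 : ℕ) : ZMod m)))]
  have hsum2 : ∑ y : ZMod m, (P y - P (y - l)) ^ 2 / P (y - l)
      ≤ (m : ℝ) * ((m : ℝ) / c * (P 0 - P ((m / 2 : ℕ) : ZMod m)) ^ 2) := by
    calc ∑ y : ZMod m, (P y - P (y - l)) ^ 2 / P (y - l)
        ≤ ∑ _y : ZMod m, (m : ℝ) / c * (P 0 - P ((m / 2 : ℕ) : ZMod m)) ^ 2 :=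
          Finset.sum_le_sum (fun y _ => hbound y)
      _ = (Fintype.card (ZMod m) : ℝ) * ((m : ℝ) / c * (P 0 - P ((m / 2 : ℕ) : ZMod m)) ^ 2) := by
          rw [Finset.sum_const, Finset.card_univ, nsmul_eq_mul]
      _ = (m : ℝ) * ((m : ℝ) / c * (P 0 - P ((m / 2 : ℕ) : ZMod m)) ^ 2) := by
          rw [ZMod.card]
  have h5 : (P 0 - P ((m / 2 : ℕ) : ZMod m)) ^ 2 ≤ 2 * klShift P l' := by
    rw [habs] at h1; linarith
  calc klShift P l ≤ (m : ℝ) * ((m : ℝ) / c * (P 0 - P ((m / 2 : ℕ) : ZMod m)) ^ 2) :=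
        le_trans hub hsum2
    _ ≤ (m : ℝ) * ((m : ℝ) / c * (2 * klShift P l')) := by
        apply mul_le_mul_of_nonneg_left
          (mul_le_mul_of_nonneg_left h5 (by positivity)) hm0.le
    _ = 2 * (m : ℝ) ^ 2 / c * klShift P l' := by
        field_simp
end
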